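/- arXiv:0806.0434 — 3 statements merged into one kernel-verified Lean document; each statement's English description precedes it below -/
import Mathlib

section
/- Let n ≥ 3 and let (h_{n,0}, h_{n,1}, ..., h_{n,⌊(n−1)/2⌋}) be the h-vector of P_n, defined by the polynomial identity P_n(x−1) = Σ_{i=0}^{⌊(n−1)/2⌋} h_{n,i} x^{⌊(n−1)/2⌋ − i}, where P_n(x) is the f-polynomial of P_n. Then for every 0 ≤ i ≤ ⌊(n−1)/2⌋, h_{n,i} = ((⌊n/2⌋ − i)/(⌊n/2⌋ + i)) · C(⌊n/2⌋ + i, ⌊n/2⌋). -/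
open Finset Polynomial

/-- `σ` is a permutation of `[n] = {1, …, n}` (viewed as a function `ℕ → ℕ`
restricted to a bijection of `{1, …, n}` onto itself). -/
def IsPermOn (n : ℕ) (σ : ℕ → ℕ) : Prop :=
  Set.BijOn σ (Set.Icc 1 n) (Set.Icc 1 n)

/-- The circular peak set of `σ` (as a permutation of `[n]`):
`CP(σ) = {σ(i) : 2 ≤ i ≤ n−1, σ(i−1) < σ(i) > σ(i+1)}`. -/
def CP (n : ℕ) (σ : ℕ → ℕ) : Finset ℕ :=
  ((Finset.Icc 2 (n - 1)).filter (fun i => σ (i - 1) < σ i ∧ σ (i + 1) < σ i)).image σ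

open scoped Classical in
/-- `Pn n` is the collection of all subsets `S ⊆ [n]` arising as the circular peak
set of some permutation of `[n]`. -/
noncomputable def Pn (n : ℕ) : Finset (Finset ℕ) :=
  (Finset.Icc 1 n).powerset.filter (fun S => ∃ σ : ℕ → ℕ, IsPermOn n σ ∧ CP n σ = S)

/-- `pcount n k` is the number of members of `Pn n` of cardinality `k`;
in the paper's notation, `p_{n,i} = pcount n (i+1)`. -/
noncomputable def pcount (n k : ℕ) : ℕ :=
  ((Pn n).filter (fun S => S.card = k)).card

/-- The f-polynomial `P_n(x) = Σ_{i=0}^{⌊(n−1)/2⌋} p_{n,i−1} x^{⌊(n−1)/2⌋−i}`. -/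
noncomputable def fpoly (n : ℕ) : Polynomial ℚ :=
  ∑ i ∈ Finset.range ((n - 1) / 2 + 1),
    Polynomial.C (pcount n i : ℚ) * Polynomial.X ^ ((n - 1) / 2 - i)

def CondP (S : Finset ℕ) : Prop := ∀ v ∈ S, 2 * (S.filter (· ≤ v)).card < v

lemma cp_cond {n : ℕ} {σ : ℕ → ℕ} (hσ : IsPermOn n σ) : CondP (CP n σ) := by
  intro v hv
  classical
  set PK : Finset ℕ :=
    (Finset.Icc 2 (n - 1)).filter (fun i => σ (i - 1) < σ i ∧ σ (i + 1) < σ i) with hPKdef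
  have hmem : ∀ i ∈ PK, (2 ≤ i ∧ i ≤ n - 1) ∧ σ (i - 1) < σ i ∧ σ (i + 1) < σ i := by
    intro i hi
    simp only [hPKdef, Finset.mem_filter, Finset.mem_Icc] at hi
    tauto
  have hn3 : 3 ≤ n := by
    obtain ⟨i, hi, -⟩ := Finset.mem_image.1 hv
    have := (hmem i hi).1
    omega
  have hsub : (PK : Set ℕ) ⊆ Set.Icc 1 n := by
    intro i hi
    have := (hmem i hi).1
    simp only [Set.mem_Icc]; omega
  have hinj : Set.InjOn σ (Set.Icc 1 n) := hσ.injOn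
  -- the set of peak positions with value ≤ v
  set P : Finset ℕ := PK.filter (fun i => σ i ≤ v) with hPdef
  have hPmem : ∀ i ∈ P, (2 ≤ i ∧ i ≤ n - 1) ∧ (σ (i - 1) < σ i ∧ σ (i + 1) < σ i) ∧ σ i ≤ v := by
    intro i hi
    simp only [hPdef, Finset.mem_filter] at hi
    exact ⟨(hmem i hi.1).1, (hmem i hi.1).2, hi.2⟩
  have hPsub : (P : Set ℕ) ⊆ Set.Icc 1 n := fun i hi => hsub (Finset.mem_of_mem_filter _ hi)
  -- card of filtered CP equals card of P
  have hcardP : ((CP n σ).filter (· ≤ v)).card = P.card := by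
    have h1 : (CP n σ).filter (· ≤ v) = P.image σ := by
      rw [CP, Finset.filter_image]
    rw [h1, Finset.card_image_of_injOn (hinj.mono hPsub)]
  -- P is nonempty
  have hPne : P.Nonempty := by
    obtain ⟨i, hi, hiv⟩ := Finset.mem_image.1 hv
    exact ⟨i, by rw [hPdef, Finset.mem_filter]; exact ⟨hi, hiv.le⟩⟩
  set imax := P.max' hPne with himax
  have himaxP : imax ∈ P := P.max'_mem hPne
  -- the big set Q
  set Q : Finset ℕ := (P ∪ P.image (· - 1)) ∪ {imax + 1} with hQdef
  have hQsub : (Q : Set ℕ) ⊆ Set.Icc 1 n := by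
    intro i hi
    simp only [hQdef, Finset.coe_union, Set.mem_union, Finset.coe_image, Set.mem_image,
      Finset.coe_singleton, Set.mem_singleton_iff] at hi
    rcases hi with (hi | ⟨p, hp, rfl⟩) | rfl
    · exact hPsub hi
    · have := (hPmem p hp).1; simp only [Set.mem_Icc]; omega
    · have := (hPmem imax himaxP).1; simp only [Set.mem_Icc]; omega
  have hd1 : Disjoint P (P.image (· - 1)) := by
    rw [Finset.disjoint_left]
    intro i hiP hiI
    obtain ⟨p, hp, hpe⟩ := Finset.mem_image.1 hiI
    have h1 := hPmem p hp
    have h2 := hPmem i hiP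
    have : p = i + 1 := by omega
    subst this
    simp only [Nat.add_sub_cancel] at h1
    omega
  have hd2 : Disjoint (P ∪ P.image (· - 1)) {imax + 1} := by
    rw [Finset.disjoint_right]
    intro i hi hiU
    simp only [Finset.mem_singleton] at hi
    subst hi
    rcases Finset.mem_union.1 hiU with h | h
    · exact absurd (P.le_max' _ h) (by omega)
    · obtain ⟨p, hp, hpe⟩ := Finset.mem_image.1 h
      have := (hPmem p hp).1
      have : p = imax + 2 := by omega
      have := P.le_max' p hp
      omega
  have hcardQ : Q.card = 2 * P.card + 1 := by
    rw [hQdef, Finset.card_union_of_disjoint hd2, Finset.card_union_of_disjoint hd1,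
      Finset.card_image_of_injOn, Finset.card_singleton]
    · ring
    · intro a ha b hb hab
      have := (hPmem a ha).1
      have := (hPmem b hb).1
      simp only at hab
      omega
  -- σ maps Q into Icc 1 v
  have hmapsto : ∀ i ∈ Q, σ i ∈ Finset.Icc 1 v := by
    intro i hi
    have h1 : 1 ≤ σ i := by
      have := hσ.mapsTo (hQsub (by exact_mod_cast hi))
      simp only [Set.mem_Icc] at this; exact this.1
    simp only [hQdef, Finset.mem_union, Finset.mem_singleton] at hi
    rcases hi with (hi | hi) | rfl
    · exact Finset.mem_Icc.2 ⟨h1, (hPmem i hi).2.2⟩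
    · obtain ⟨p, hp, rfl⟩ := Finset.mem_image.1 hi
      have h2 := hPmem p hp
      refine Finset.mem_Icc.2 ⟨h1, ?_⟩
      have : σ (p - 1) < σ p := by
        have := h2.2.1.1; exact this
      omega
    · have h2 := hPmem imax himaxP
      exact Finset.mem_Icc.2 ⟨h1, by omega⟩
  have hfinal : Q.card ≤ v := by
    calc Q.card = (Q.image σ).card := (Finset.card_image_of_injOn (hinj.mono hQsub)).symm
    _ ≤ (Finset.Icc 1 v).card := Finset.card_le_card (fun y hy => by
        obtain ⟨i, hi, rfl⟩ := Finset.mem_image.1 hy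
        exact hmapsto i hi)
    _ = v := by rw [Nat.card_Icc]; omega
  omega


lemma exists_perm_aux : ∀ n : ℕ, ∀ S : Finset ℕ, S ⊆ Finset.Icc 1 n → CondP S →
    ∃ σ : ℕ → ℕ, IsPermOn n σ ∧ CP n σ = S ∧
      StrictMonoOn σ (Set.Icc (2 * S.card + 1) n) := by
  intro n
  induction n with
  | zero =>
    intro S hS hc
    have hSe : S = ∅ := by
      rw [Finset.eq_empty_iff_forall_notMem]
      intro x hx; have := Finset.mem_Icc.1 (hS hx); omega
    subst hSe
    refine ⟨id, ?_, ?_, fun a _ b _ hab => hab⟩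
    · have : Set.Icc (1:ℕ) 0 = ∅ := Set.Icc_eq_empty (by norm_num)
      rw [IsPermOn, this]
      exact Set.bijOn_empty id
    · rw [CP]
      have : Finset.Icc 2 (0-1) = (∅ : Finset ℕ) := by
        apply Finset.Icc_eq_empty; omega
      rw [this]; simp
  | succ n ih =>
    intro S hS hc
    by_cases hn1 : (n+1) ∈ S
    · -- n+1 is a peak value
      set k := S.card with hkdef
      have hk : 1 ≤ k := Finset.card_pos.2 ⟨_, hn1⟩
      have h2k : 2 * k < n + 1 := by
        have := hc (n+1) hn1
        rwa [Finset.filter_true_of_mem (fun x hx => Finset.mem_Icc.1 (hS hx) |>.2)] at this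
      set S' := S.erase (n+1) with hS'def
      have hcard' : S'.card = k - 1 := by rw [hS'def, Finset.card_erase_of_mem hn1]
      have hS'sub : S' ⊆ Finset.Icc 1 n := by
        intro v hv
        have h1 := Finset.mem_Icc.1 (hS (Finset.mem_of_mem_erase hv))
        have h2 := Finset.ne_of_mem_erase hv
        exact Finset.mem_Icc.2 ⟨h1.1, by omega⟩
      have hc' : CondP S' := by
        intro v hv
        have hvS : v ∈ S := Finset.mem_of_mem_erase hv
        have hvn : v ≤ n := (Finset.mem_Icc.1 (hS'sub hv)).2
        have hfe : S'.filter (· ≤ v) = S.filter (· ≤ v) := by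
          ext x
          simp only [hS'def, Finset.mem_filter, Finset.mem_erase]
          constructor
          · rintro ⟨⟨-, hx⟩, hxv⟩; exact ⟨hx, hxv⟩
          · rintro ⟨hx, hxv⟩; exact ⟨⟨by omega, hx⟩, hxv⟩
        rw [hfe]; exact hc v hvS
      obtain ⟨σ', hperm', hcp', hmono'⟩ := ih S' hS'sub hc'
      have hσ'mem : ∀ j, 1 ≤ j → j ≤ n → 1 ≤ σ' j ∧ σ' j ≤ n := by
        intro j h1 h2
        have := hperm'.mapsTo (Set.mem_Icc.2 ⟨h1, h2⟩)
        exact Set.mem_Icc.1 this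
      have hinj' : Set.InjOn σ' (Set.Icc 1 n) := hperm'.injOn
      have hm : ∀ a b, 2*k - 1 ≤ a → a < b → b ≤ n → σ' a < σ' b := by
        intro a b h1 h2 h3
        exact hmono' (Set.mem_Icc.2 ⟨by omega, by omega⟩)
          (Set.mem_Icc.2 ⟨by omega, h3⟩) h2
      set σ : ℕ → ℕ := fun i => if i < 2*k then σ' i else if i = 2*k then n+1 else σ' (i-1)
        with hσdef
      have hlo : ∀ j, j < 2*k → σ j = σ' j := by
        intro j hj; simp only [hσdef, if_pos hj]
      have hmid : σ (2*k) = n+1 := by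
        simp only [hσdef]
        rw [if_neg (by omega)]
        simp
      have hhi : ∀ j, 2*k < j → σ j = σ' (j-1) := by
        intro j hj; simp only [hσdef]; rw [if_neg (by omega), if_neg (by omega)]
      -- values other than position 2k are ≤ n
      have hne2k : ∀ j, 1 ≤ j → j ≤ n+1 → j ≠ 2*k → 1 ≤ σ j ∧ σ j ≤ n := by
        intro j h1 h2 h3
        rcases lt_or_gt_of_ne h3 with h | h
        · rw [hlo j h]; exact hσ'mem j h1 (by omega)
        · rw [hhi j h]; exact hσ'mem (j-1) (by omega) (by omega)
      have hperm : IsPermOn (n+1) σ := by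
        refine ⟨?_, ?_, ?_⟩
        · intro x hx
          rcases Set.mem_Icc.1 hx with ⟨hx1, hx2⟩
          by_cases hx3 : x = 2*k
          · subst hx3; rw [hmid]; exact Set.mem_Icc.2 ⟨by omega, le_refl _⟩
          · have := hne2k x hx1 hx2 hx3
            exact Set.mem_Icc.2 ⟨this.1, by omega⟩
        · intro a ha b hb hab
          rcases Set.mem_Icc.1 ha with ⟨ha1, ha2⟩
          rcases Set.mem_Icc.1 hb with ⟨hb1, hb2⟩
          by_cases hae : a = 2*k <;> by_cases hbe : b = 2*k
          · omega
          · exfalso; have := hne2k b hb1 hb2 hbe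
            rw [hae, hmid] at hab; omega
          · exfalso; have := hne2k a ha1 ha2 hae
            rw [hbe, hmid] at hab; omega
          · rcases lt_or_gt_of_ne hae with ha' | ha' <;>
              rcases lt_or_gt_of_ne hbe with hb' | hb'
            · rw [hlo a ha', hlo b hb'] at hab
              exact hinj' (Set.mem_Icc.2 ⟨ha1, by omega⟩) (Set.mem_Icc.2 ⟨hb1, by omega⟩) hab
            · exfalso
              rw [hlo a ha', hhi b hb'] at hab
              have := hinj' (Set.mem_Icc.2 ⟨ha1, by omega⟩)
                (Set.mem_Icc.2 (⟨by omega, by omega⟩ : 1 ≤ b - 1 ∧ b - 1 ≤ n)) hab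
              omega
            · exfalso
              rw [hhi a ha', hlo b hb'] at hab
              have := hinj' (Set.mem_Icc.2 (⟨by omega, by omega⟩ : 1 ≤ a - 1 ∧ a - 1 ≤ n))
                (Set.mem_Icc.2 ⟨hb1, by omega⟩) hab
              omega
            · rw [hhi a ha', hhi b hb'] at hab
              have := hinj' (Set.mem_Icc.2 (⟨by omega, by omega⟩ : 1 ≤ a - 1 ∧ a - 1 ≤ n))
                (Set.mem_Icc.2 (⟨by omega, by omega⟩ : 1 ≤ b - 1 ∧ b - 1 ≤ n)) hab
              omega
        · intro y hy
          rcases Set.mem_Icc.1 hy with ⟨hy1, hy2⟩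
          by_cases hye : y = n+1
          · exact ⟨2*k, Set.mem_Icc.2 ⟨by omega, by omega⟩, by rw [hmid, hye]⟩
          · obtain ⟨j, hj, hjy⟩ := hperm'.surjOn (Set.mem_Icc.2 ⟨hy1, by omega⟩)
            rcases Set.mem_Icc.1 hj with ⟨hj1, hj2⟩
            by_cases hjc : j < 2*k
            · exact ⟨j, Set.mem_Icc.2 ⟨hj1, by omega⟩, by rw [hlo j hjc]; exact hjy⟩
            · refine ⟨j+1, Set.mem_Icc.2 ⟨by omega, by omega⟩, ?_⟩
              rw [hhi (j+1) (by omega)]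
              simpa using hjy
      -- the peak position sets
      set F0 : Finset ℕ :=
        (Finset.Icc 2 (n - 1)).filter (fun i => σ' (i - 1) < σ' i ∧ σ' (i + 1) < σ' i)
        with hF0def
      have hF0lt : ∀ i ∈ F0, i + 1 < 2*k := by
        intro i hi
        simp only [hF0def, Finset.mem_filter, Finset.mem_Icc] at hi
        by_contra hcon
        have : σ' i < σ' (i+1) := hm i (i+1) (by omega) (by omega) (by omega)
        omega
      have hFeq : (Finset.Icc 2 ((n+1) - 1)).filter
          (fun i => σ (i - 1) < σ i ∧ σ (i + 1) < σ i) = insert (2*k) F0 := by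
        ext i
        simp only [Finset.mem_insert, hF0def, Finset.mem_filter, Finset.mem_Icc,
          Nat.add_sub_cancel]
        constructor
        · rintro ⟨⟨hi2, hin⟩, hp1, hp2⟩
          rcases Nat.lt_trichotomy i (2*k) with hi | hi | hi
          · rcases Nat.lt_or_ge i (2*k - 1) with hi' | hi'
            · right
              rw [hlo (i-1) (by omega), hlo i (by omega)] at hp1
              rw [hlo (i+1) (by omega), hlo i (by omega)] at hp2
              refine ⟨⟨hi2, ?_⟩, hp1, hp2⟩
              omega
            · exfalso
              have hie : i = 2*k - 1 := by omega
              have : i + 1 = 2*k := by omega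
              rw [this, hmid] at hp2
              rw [hlo i hi] at hp2
              have := hσ'mem i (by omega) (by omega)
              omega
          · left; exact hi
          · exfalso
            rw [hhi i hi, hhi (i+1) (by omega)] at hp2
            have : σ' (i-1) < σ' (i+1-1) := hm (i-1) (i+1-1) (by omega) (by omega) (by omega)
            omega
        · rintro (rfl | ⟨⟨hi2, hin⟩, hp1, hp2⟩)
          · refine ⟨⟨by omega, by omega⟩, ?_, ?_⟩
            · rw [hlo (2*k-1) (by omega), hmid]
              have := hσ'mem (2*k-1) (by omega) (by omega)
              omega
            · rw [hhi (2*k+1) (by omega), hmid]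
              have := hσ'mem (2*k+1-1) (by omega) (by omega)
              omega
          · have hiF0 : i ∈ F0 := by
              simp only [hF0def, Finset.mem_filter, Finset.mem_Icc]
              exact ⟨⟨hi2, hin⟩, hp1, hp2⟩
            have hik := hF0lt i hiF0
            rw [hlo (i-1) (by omega), hlo i (by omega), hlo (i+1) (by omega)]
            exact ⟨⟨hi2, by omega⟩, hp1, hp2⟩
      have hcp : CP (n+1) σ = S := by
        rw [CP, hFeq, Finset.image_insert, hmid]
        have himg : F0.image σ = F0.image σ' := by
          apply Finset.image_congr
          intro i hi
          exact hlo i (by have := hF0lt i hi; omega)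
        rw [himg]
        have : F0.image σ' = S' := hcp'
        rw [this, hS'def, Finset.insert_erase hn1]
      refine ⟨σ, hperm, hcp, ?_⟩
      intro a ha b hb hab
      rcases Set.mem_Icc.1 ha with ⟨ha1, ha2⟩
      rcases Set.mem_Icc.1 hb with ⟨hb1, hb2⟩
      rw [hhi a (by omega), hhi b (by omega)]
      exact hm (a-1) (b-1) (by omega) (by omega) (by omega)
    · -- n+1 is not in S
      have hS' : S ⊆ Finset.Icc 1 n := by
        intro v hv
        have h1 := Finset.mem_Icc.1 (hS hv)
        have : v ≠ n+1 := fun h => hn1 (h ▸ hv)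
        exact Finset.mem_Icc.2 ⟨h1.1, by omega⟩
      obtain ⟨σ', hperm', hcp', hmono'⟩ := ih S hS' hc
      set σ : ℕ → ℕ := fun i => if i = n+1 then n+1 else σ' i with hσdef
      have hlo : ∀ j, j ≤ n → σ j = σ' j := by
        intro j hj; simp only [hσdef]; rw [if_neg (by omega)]
      have hmid : σ (n+1) = n+1 := by simp [hσdef]
      have hσ'mem : ∀ j, 1 ≤ j → j ≤ n → 1 ≤ σ' j ∧ σ' j ≤ n := by
        intro j h1 h2
        exact Set.mem_Icc.1 (hperm'.mapsTo (Set.mem_Icc.2 ⟨h1, h2⟩))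
      have hinj' : Set.InjOn σ' (Set.Icc 1 n) := hperm'.injOn
      have hperm : IsPermOn (n+1) σ := by
        refine ⟨?_, ?_, ?_⟩
        · intro x hx
          rcases Set.mem_Icc.1 hx with ⟨hx1, hx2⟩
          by_cases hxe : x = n+1
          · subst hxe; rw [hmid]; exact Set.mem_Icc.2 ⟨by omega, le_refl _⟩
          · rw [hlo x (by omega)]
            have := hσ'mem x hx1 (by omega)
            exact Set.mem_Icc.2 ⟨this.1, by omega⟩
        · intro a ha b hb hab
          rcases Set.mem_Icc.1 ha with ⟨ha1, ha2⟩
          rcases Set.mem_Icc.1 hb with ⟨hb1, hb2⟩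
          by_cases hae : a = n+1 <;> by_cases hbe : b = n+1
          · omega
          · exfalso
            rw [hae, hmid, hlo b (by omega)] at hab
            have := hσ'mem b hb1 (by omega); omega
          · exfalso
            rw [hbe, hmid, hlo a (by omega)] at hab
            have := hσ'mem a ha1 (by omega); omega
          · rw [hlo a (by omega), hlo b (by omega)] at hab
            exact hinj' (Set.mem_Icc.2 ⟨ha1, by omega⟩) (Set.mem_Icc.2 ⟨hb1, by omega⟩) hab
        · intro y hy
          rcases Set.mem_Icc.1 hy with ⟨hy1, hy2⟩
          by_cases hye : y = n+1
          · exact ⟨n+1, Set.mem_Icc.2 ⟨by omega, le_refl _⟩, by rw [hmid, hye]⟩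
          · obtain ⟨j, hj, hjy⟩ := hperm'.surjOn (Set.mem_Icc.2 ⟨hy1, by omega⟩)
            rcases Set.mem_Icc.1 hj with ⟨hj1, hj2⟩
            exact ⟨j, Set.mem_Icc.2 ⟨hj1, by omega⟩, by rw [hlo j hj2]; exact hjy⟩
      have hFeq : (Finset.Icc 2 ((n+1) - 1)).filter
          (fun i => σ (i - 1) < σ i ∧ σ (i + 1) < σ i) =
          (Finset.Icc 2 (n - 1)).filter
          (fun i => σ' (i - 1) < σ' i ∧ σ' (i + 1) < σ' i) := by
        ext i
        simp only [Finset.mem_filter, Finset.mem_Icc, Nat.add_sub_cancel]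
        constructor
        · rintro ⟨⟨hi2, hin⟩, hp1, hp2⟩
          rcases Nat.lt_or_ge i n with hi | hi
          · rw [hlo (i-1) (by omega), hlo i (by omega)] at hp1
            rw [hlo (i+1) (by omega), hlo i (by omega)] at hp2
            exact ⟨⟨hi2, by omega⟩, hp1, hp2⟩
          · exfalso
            have hie : i = n := by omega
            rw [hie] at hp2
            rw [hmid, hlo n (by omega)] at hp2
            have := hσ'mem n (by omega) (le_refl _)
            omega
        · rintro ⟨⟨hi2, hin⟩, hp1, hp2⟩
          rw [hlo (i-1) (by omega), hlo i (by omega), hlo (i+1) (by omega)]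
          exact ⟨⟨hi2, by omega⟩, hp1, hp2⟩
      have hcp : CP (n+1) σ = S := by
        rw [CP, hFeq]
        have himg : ((Finset.Icc 2 (n - 1)).filter
            (fun i => σ' (i - 1) < σ' i ∧ σ' (i + 1) < σ' i)).image σ =
            ((Finset.Icc 2 (n - 1)).filter
            (fun i => σ' (i - 1) < σ' i ∧ σ' (i + 1) < σ' i)).image σ' := by
          apply Finset.image_congr
          intro i hi
          simp only [Finset.mem_coe, Finset.mem_filter, Finset.mem_Icc] at hi
          exact hlo i (by omega)
        rw [himg]
        exact hcp'
      refine ⟨σ, hperm, hcp, ?_⟩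
      intro a ha b hb hab
      rcases Set.mem_Icc.1 ha with ⟨ha1, ha2⟩
      rcases Set.mem_Icc.1 hb with ⟨hb1, hb2⟩
      by_cases hbe : b = n+1
      · rw [hbe, hmid, hlo a (by omega)]
        have := hσ'mem a (by omega) (by omega)
        omega
      · rw [hlo a (by omega), hlo b (by omega)]
        exact hmono' (Set.mem_Icc.2 ⟨ha1, by omega⟩) (Set.mem_Icc.2 ⟨hb1, by omega⟩) hab


open scoped Classical in
noncomputable def Ncount (n k : ℕ) : ℕ :=
  ((Finset.Icc 1 n).powerset.filter (fun S => S.card = k ∧ CondP S)).card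

lemma Ncount_zero (n : ℕ) : Ncount n 0 = 1 := by
  classical
  rw [Ncount]
  have : ((Finset.Icc 1 n).powerset.filter (fun S => S.card = 0 ∧ CondP S))
      = {(∅ : Finset ℕ)} := by
    ext S
    simp only [Finset.mem_filter, Finset.mem_powerset, Finset.mem_singleton,
      Finset.card_eq_zero]
    constructor
    · rintro ⟨-, h, -⟩; exact h
    · rintro rfl
      exact ⟨Finset.empty_subset _, rfl, fun v hv => absurd hv (Finset.notMem_empty v)⟩
  rw [this, Finset.card_singleton]

lemma Ncount_eq_zero {n k : ℕ} (h : n < 2*k) : Ncount n k = 0 := by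
  classical
  rw [Ncount, Finset.card_eq_zero, Finset.filter_eq_empty_iff]
  rintro S hS ⟨hcard, hcond⟩
  have hk : 1 ≤ k := by omega
  have hne : S.Nonempty := Finset.card_pos.1 (by omega)
  have hv := S.max'_mem hne
  have h1 := hcond _ hv
  rw [Finset.filter_true_of_mem (fun x hx => S.le_max' x hx)] at h1
  have h2 := (Finset.mem_Icc.1 ((Finset.mem_powerset.1 hS) hv)).2
  omega

lemma Ncount_succ (n k : ℕ) :
    Ncount (n+1) (k+1) = Ncount n (k+1) + if 2*k+2 ≤ n then Ncount n k else 0 := by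
  classical
  have hicc : Finset.Icc 1 (n+1) = insert (n+1) (Finset.Icc 1 n) := by
    ext x; simp [Finset.mem_Icc]; omega
  rw [Ncount, hicc, Finset.powerset_insert, Finset.filter_union]
  have hdisj : Disjoint
      ((Finset.Icc 1 n).powerset.filter (fun S => S.card = k+1 ∧ CondP S))
      (((Finset.Icc 1 n).powerset.image (insert (n+1))).filter
        (fun S => S.card = k+1 ∧ CondP S)) := by
    rw [Finset.disjoint_left]
    intro S hS1 hS2
    have h1 : (n+1) ∉ S := by
      intro hx
      have := (Finset.mem_Icc.1 ((Finset.mem_powerset.1 (Finset.mem_of_mem_filter _ hS1)) hx)).2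
      omega
    obtain ⟨T, -, rfl⟩ := Finset.mem_image.1 (Finset.mem_of_mem_filter _ hS2)
    exact h1 (Finset.mem_insert_self _ _)
  rw [Finset.card_union_of_disjoint hdisj]
  congr 1
  rw [Finset.filter_image]
  have hinj : Set.InjOn (insert (n+1)) (((Finset.Icc 1 n).powerset.filter
      (fun a => (insert (n+1) a).card = k+1 ∧ CondP (insert (n+1) a))) : Set (Finset ℕ)) := by
    intro a ha b hb hab
    have han : (n+1) ∉ a := by
      intro hx
      have := (Finset.mem_Icc.1 ((Finset.mem_powerset.1
        (Finset.mem_of_mem_filter _ (Finset.mem_coe.1 ha))) hx)).2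
      omega
    have hbn : (n+1) ∉ b := by
      intro hx
      have := (Finset.mem_Icc.1 ((Finset.mem_powerset.1
        (Finset.mem_of_mem_filter _ (Finset.mem_coe.1 hb))) hx)).2
      omega
    rw [← Finset.erase_insert han, ← Finset.erase_insert hbn, hab]
  rw [Finset.card_image_of_injOn hinj]
  have key : ∀ T ∈ (Finset.Icc 1 n).powerset,
      ((insert (n+1) T).card = k+1 ∧ CondP (insert (n+1) T)) ↔
      ((T.card = k ∧ CondP T) ∧ 2*k+2 ≤ n) := by
    intro T hT
    rw [Finset.mem_powerset] at hT
    have hTn : (n+1) ∉ T := by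
      intro hx
      have := (Finset.mem_Icc.1 (hT hx)).2
      omega
    have hci : (insert (n+1) T).card = T.card + 1 := Finset.card_insert_of_notMem hTn
    have hle : ∀ x ∈ T, x ≤ n := fun x hx => (Finset.mem_Icc.1 (hT hx)).2
    have hfeq : ∀ v ∈ T, (insert (n+1) T).filter (· ≤ v) = T.filter (· ≤ v) := by
      intro v hv
      ext x
      simp only [Finset.mem_filter, Finset.mem_insert]
      constructor
      · rintro ⟨(rfl | hx), hxv⟩
        · exact absurd hxv (by have := hle v hv; omega)
        · exact ⟨hx, hxv⟩
      · rintro ⟨hx, hxv⟩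
        exact ⟨Or.inr hx, hxv⟩
    have hfull : (insert (n+1) T).filter (· ≤ n+1) = insert (n+1) T := by
      apply Finset.filter_true_of_mem
      intro x hx
      rcases Finset.mem_insert.1 hx with rfl | hx
      · exact le_refl _
      · have := hle x hx; omega
    constructor
    · rintro ⟨hcard, hcond⟩
      have hTc : T.card = k := by omega
      have hP : CondP T := by
        intro v hv
        have := hcond v (Finset.mem_insert_of_mem hv)
        rwa [hfeq v hv] at this
      have h2 := hcond (n+1) (Finset.mem_insert_self _ _)
      rw [hfull, hci, hTc] at h2
      exact ⟨⟨hTc, hP⟩, by omega⟩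
    · rintro ⟨⟨hTc, hP⟩, hkn⟩
      refine ⟨by omega, ?_⟩
      intro v hv
      rcases Finset.mem_insert.1 hv with rfl | hv
      · rw [hfull, hci, hTc]; omega
      · rw [hfeq v hv]; exact hP v hv
  rw [Finset.filter_congr key]
  by_cases hcase : 2*k+2 ≤ n
  · rw [if_pos hcase]
    rw [Ncount]
    congr 1
    apply Finset.filter_congr
    intro T hT
    simp [hcase]
  · rw [if_neg hcase]
    have : (Finset.Icc 1 n).powerset.filter (fun T => (T.card = k ∧ CondP T) ∧ 2*k+2 ≤ n) = ∅ := by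
      apply Finset.filter_eq_empty_iff.2
      rintro T - ⟨-, hc⟩
      exact hcase hc
    rw [this, Finset.card_empty]

lemma Ncount_formula : ∀ n : ℕ, ∀ k : ℕ, 2*k+2 ≤ n →
    Ncount n (k+1) + 2 * Nat.choose (n-1) k = Nat.choose n (k+1) := by
  intro n
  induction n with
  | zero => intro k h; omega
  | succ m ih =>
    intro k h
    rw [Ncount_succ]
    simp only [Nat.add_sub_cancel]
    by_cases hc : 2*k+2 ≤ m
    · rw [if_pos hc]
      have h1 := ih k hc
      rcases Nat.eq_zero_or_pos k with rfl | hk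
      · rw [Ncount_zero]
        have e1 : Nat.choose (m+1) (0+1) = m+1 := Nat.choose_one_right _
        have e2 : Nat.choose m (0+1) = m := Nat.choose_one_right _
        have e3 : Nat.choose m 0 = 1 := Nat.choose_zero_right _
        have e4 : Nat.choose (m-1) 0 = 1 := Nat.choose_zero_right _
        omega
      · obtain ⟨k', rfl⟩ : ∃ k', k = k'+1 := ⟨k-1, by omega⟩
        have h2 := ih k' (by omega)
        have pascal : Nat.choose m (k'+1) = Nat.choose (m-1) k' + Nat.choose (m-1) (k'+1) := by
          obtain ⟨m', rfl⟩ : ∃ m', m = m'+1 := ⟨m-1, by omega⟩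
          simp only [Nat.add_sub_cancel]
          exact Nat.choose_succ_succ _ _
        have pascal2 : Nat.choose (m+1) (k'+1+1) = Nat.choose m (k'+1) + Nat.choose m (k'+1+1) :=
          Nat.choose_succ_succ _ _
        omega
    · rw [if_neg hc]
      have hm : m = 2*k+1 := by omega
      subst hm
      have hz : Ncount (2*k+1) (k+1) = 0 := Ncount_eq_zero (by omega)
      have e1 : Nat.choose (2*k+1+1) (k+1) = Nat.choose (2*k+1) k + Nat.choose (2*k+1) (k+1) :=
        Nat.choose_succ_succ _ _
      have e2 : Nat.choose (2*k+1) (k+1) = Nat.choose (2*k+1) k := by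
        rw [← Nat.choose_symm (by omega : k ≤ 2*k+1)]
        congr 1
        omega
      omega

lemma idS (m : ℕ) : ∀ d j : ℕ, j ≤ d →
    ∑ i ∈ Finset.range (j+1), Nat.choose (m+i) i * Nat.choose (d-i) (j-i)
      = Nat.choose (m+d+1) j := by
  intro d
  induction d with
  | zero =>
    intro j hj
    interval_cases j
    simp
  | succ d ihd =>
    intro j hj
    rcases Nat.eq_zero_or_pos j with rfl | hjpos
    · simp
    obtain ⟨j', rfl⟩ : ∃ j', j = j'+1 := ⟨j-1, by omega⟩
    rw [Finset.sum_range_succ]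
    have split : ∑ i ∈ Finset.range (j'+1), Nat.choose (m+i) i * Nat.choose (d+1-i) (j'+1-i)
        = (∑ i ∈ Finset.range (j'+1), Nat.choose (m+i) i * Nat.choose (d-i) (j'-i))
        + ∑ i ∈ Finset.range (j'+1), Nat.choose (m+i) i * Nat.choose (d-i) (j'+1-i) := by
      rw [← Finset.sum_add_distrib]
      apply Finset.sum_congr rfl
      intro i hi
      have hi' : i ≤ j' := by have := Finset.mem_range.1 hi; omega
      have e1 : d+1-i = (d-i)+1 := by omega
      have e2 : j'+1-i = (j'-i)+1 := by omega
      have e3 : Nat.choose (d+1-i) (j'+1-i)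
          = Nat.choose (d-i) (j'-i) + Nat.choose (d-i) (j'+1-i) := by
        rw [e1, e2]; exact Nat.choose_succ_succ _ _
      rw [e3, Nat.mul_add]
    rw [split]
    have h1 : ∑ i ∈ Finset.range (j'+1), Nat.choose (m+i) i * Nat.choose (d-i) (j'-i)
        = Nat.choose (m+d+1) j' := ihd j' (by omega)
    have pascal : Nat.choose (m+d+1+1) (j'+1) = Nat.choose (m+d+1) j' + Nat.choose (m+d+1) (j'+1) :=
      Nat.choose_succ_succ _ _
    rw [show m+(d+1)+1 = m+d+1+1 from by omega]
    simp only [Nat.sub_self, Nat.choose_zero_right, mul_one, Nat.succ_sub_succ]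
    by_cases hle : j'+1 ≤ d
    · have h2 := ihd (j'+1) hle
      rw [Finset.sum_range_succ] at h2
      simp only [Nat.sub_self, Nat.choose_zero_right, mul_one] at h2
      omega
    · have hjd : j' = d := by omega
      subst hjd
      have h2 : ∑ i ∈ Finset.range (j'+1), Nat.choose (m+i) i * Nat.choose (j'-i) (j'+1-i) = 0 := by
        apply Finset.sum_eq_zero
        intro i hi
        have hi' : i ≤ j' := by have := Finset.mem_range.1 hi; omega
        have : Nat.choose (j'-i) (j'+1-i) = 0 := Nat.choose_eq_zero_of_lt (by omega)
        rw [this, Nat.mul_zero]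
      rw [show m+(j'+1) = m+j'+1 from by omega]
      omega



lemma pcount_eq (n k : ℕ) : pcount n k = Ncount n k := by
  classical
  rw [pcount, Pn, Ncount, Finset.filter_filter]
  congr 1
  apply Finset.filter_congr
  intro S hS
  rw [Finset.mem_powerset] at hS
  constructor
  · rintro ⟨⟨σ, hσ, rfl⟩, hcard⟩
    exact ⟨hcard, cp_cond hσ⟩
  · rintro ⟨hcard, hcond⟩
    obtain ⟨σ, h1, h2, -⟩ := exists_perm_aux n S hS hcond
    exact ⟨⟨σ, h1, h2⟩, hcard⟩

lemma pcount_zero (n : ℕ) : pcount n 0 = 1 := by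
  rw [pcount_eq, Ncount_zero]

lemma pcount_formula (n k : ℕ) (h : 2*k+2 ≤ n) :
    pcount n (k+1) + 2 * Nat.choose (n-1) k = Nat.choose n (k+1) := by
  rw [pcount_eq]
  exact Ncount_formula n k h

lemma gval (m : ℕ) (hm : 1 ≤ m) (i : ℕ) :
    ((m:ℚ) - ((i:ℕ)+1:ℚ))/((m:ℚ) + ((i:ℕ)+1:ℚ)) * (Nat.choose (m+(i+1)) m : ℚ)
      = (Nat.choose (m+i+1) (i+1) : ℚ) - 2 * (Nat.choose (m+i) i : ℚ) := by
  have hsymm : Nat.choose (m+(i+1)) m = Nat.choose (m+(i+1)) (i+1) := by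
    have := Nat.choose_symm (show i+1 ≤ m+(i+1) by omega)
    rwa [show m+(i+1)-(i+1) = m from by omega] at this
  have hmul : (m+i+1) * Nat.choose (m+i) i = Nat.choose (m+i+1) (i+1) * (i+1) :=
    Nat.add_one_mul_choose_eq _ _
  have hmulQ : ((m:ℚ)+(i:ℚ)+1) * (Nat.choose (m+i) i : ℚ)
      = (Nat.choose (m+i+1) (i+1):ℚ) * ((i:ℚ)+1) := by
    exact_mod_cast hmul
  rw [hsymm, show m+(i+1) = m+i+1 from by omega]
  have hne : (m:ℚ) + ((i:ℕ)+1:ℚ) ≠ 0 := by positivity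
  rw [div_mul_eq_mul_div, div_eq_iff hne]
  push_cast
  linear_combination 2 * hmulQ


lemma key_sum_arith (m d : ℕ) (hm : 1 ≤ m) (j : ℕ) (hj1 : 1 ≤ j) (hj : j ≤ d) :
    ∑ i ∈ Finset.range (d+1),
      (((m:ℚ) - (i:ℚ))/((m:ℚ) + (i:ℚ)) * (Nat.choose (m+i) m : ℚ))
        * (Nat.choose (d-i) (d-j) : ℚ)
    = (Nat.choose (m+d+1) j : ℚ) - 2 * (Nat.choose (m+d) (j-1) : ℚ) := by
  have hrestrict : ∑ i ∈ Finset.range (d+1),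
      (((m:ℚ) - (i:ℚ))/((m:ℚ) + (i:ℚ)) * (Nat.choose (m+i) m : ℚ))
        * (Nat.choose (d-i) (d-j) : ℚ)
      = ∑ i ∈ Finset.range (j+1),
      (((m:ℚ) - (i:ℚ))/((m:ℚ) + (i:ℚ)) * (Nat.choose (m+i) m : ℚ))
        * (Nat.choose (d-i) (d-j) : ℚ) := by
    symm
    apply Finset.sum_subset
    · intro x hx
      simp only [Finset.mem_range] at hx ⊢
      omega
    · intro x hx hnx
      simp only [Finset.mem_range] at hx hnx
      have : Nat.choose (d-x) (d-j) = 0 := Nat.choose_eq_zero_of_lt (by omega)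
      rw [this]
      push_cast
      ring
  rw [hrestrict, Finset.sum_range_succ']
  have h0 : (((m:ℚ) - ((0:ℕ):ℚ))/((m:ℚ) + ((0:ℕ):ℚ)) * (Nat.choose (m+0) m : ℚ))
      * (Nat.choose (d-0) (d-j) : ℚ) = (Nat.choose d (d-j) : ℚ) := by
    have hne : ((m:ℚ)) ≠ 0 := Nat.cast_ne_zero.2 (by omega)
    simp [Nat.choose_self, div_self hne]
  rw [h0]
  have hterm : ∀ x ∈ Finset.range j,
      (((m:ℚ) - ((x+1:ℕ):ℚ))/((m:ℚ) + ((x+1:ℕ):ℚ)) * (Nat.choose (m+(x+1)) m : ℚ))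
        * (Nat.choose (d-(x+1)) (d-j) : ℚ)
      = (Nat.choose (m+x+1) (x+1) : ℚ) * (Nat.choose (d-(x+1)) (d-j) : ℚ)
        - 2 * ((Nat.choose (m+x) x : ℚ) * (Nat.choose (d-(x+1)) (d-j) : ℚ)) := by
    intro x hx
    rw [show (((x+1:ℕ)):ℚ) = ((x:ℕ):ℚ)+1 from by push_cast; ring]
    rw [gval m hm x]
    ring
  rw [Finset.sum_congr rfl hterm, Finset.sum_sub_distrib]
  -- Now the two ℕ identities
  have hANat : (∑ x ∈ Finset.range j, Nat.choose (m+x+1) (x+1) * Nat.choose (d-(x+1)) (d-j))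
      + Nat.choose d (d-j) = Nat.choose (m+d+1) j := by
    have hid := idS m d j hj
    rw [Finset.sum_range_succ'] at hid
    have e0 : Nat.choose (m+0) 0 * Nat.choose (d-0) (j-0) = Nat.choose d (d-j) := by
      simp only [Nat.add_zero, Nat.choose_zero_right, Nat.sub_zero, one_mul]
      have := Nat.choose_symm (show j ≤ d from hj)
      rw [← this]
    rw [e0] at hid
    have econg : ∀ x ∈ Finset.range j,
        Nat.choose (m+(x+1)) (x+1) * Nat.choose (d-(x+1)) (j-(x+1))
        = Nat.choose (m+x+1) (x+1) * Nat.choose (d-(x+1)) (d-j) := by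
      intro x hx
      simp only [Finset.mem_range] at hx
      have e1 : Nat.choose (d-(x+1)) (d-j) = Nat.choose (d-(x+1)) (j-(x+1)) := by
        have := Nat.choose_symm (show j-(x+1) ≤ d-(x+1) by omega)
        rwa [show d-(x+1)-(j-(x+1)) = d-j from by omega] at this
      rw [e1, show m+(x+1) = m+x+1 from by omega]
    rw [Finset.sum_congr rfl econg] at hid
    exact hid
  have hBNat : (∑ x ∈ Finset.range j, Nat.choose (m+x) x * Nat.choose (d-(x+1)) (d-j))
      = Nat.choose (m+d) (j-1) := by
    obtain ⟨j', rfl⟩ : ∃ j', j = j'+1 := ⟨j-1, by omega⟩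
    have hid := idS m (d-1) j' (by omega)
    have econg : ∀ x ∈ Finset.range (j'+1),
        Nat.choose (m+x) x * Nat.choose ((d-1)-x) (j'-x)
        = Nat.choose (m+x) x * Nat.choose (d-(x+1)) (d-(j'+1)) := by
      intro x hx
      simp only [Finset.mem_range] at hx
      have e1 : (d-1)-x = d-(x+1) := by omega
      have e2 : Nat.choose (d-(x+1)) (d-(j'+1)) = Nat.choose (d-(x+1)) (j'-x) := by
        have := Nat.choose_symm (show j'-x ≤ d-(x+1) by omega)
        rwa [show d-(x+1)-(j'-x) = d-(j'+1) from by omega] at this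
      rw [e1, e2]
    rw [Finset.sum_congr rfl econg] at hid
    rw [hid, show m+(d-1)+1 = m+d from by omega, Nat.add_sub_cancel]
  have hAQ : (∑ x ∈ Finset.range j, (Nat.choose (m+x+1) (x+1):ℚ) * (Nat.choose (d-(x+1)) (d-j):ℚ))
      + (Nat.choose d (d-j) : ℚ) = (Nat.choose (m+d+1) j : ℚ) := by
    exact_mod_cast congrArg (fun x : ℕ => (x:ℚ)) hANat
  have hBQ : (∑ x ∈ Finset.range j, (Nat.choose (m+x) x:ℚ) * (Nat.choose (d-(x+1)) (d-j):ℚ))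
      = (Nat.choose (m+d) (j-1) : ℚ) := by
    exact_mod_cast congrArg (fun x : ℕ => (x:ℚ)) hBNat
  rw [← Finset.mul_sum] at *
  linarith [hAQ, hBQ]


lemma coeff_extract (d : ℕ) (c : ℕ → ℚ) (i : ℕ) (hi : i ≤ d) :
    (∑ j ∈ Finset.range (d+1), Polynomial.C (c j) * Polynomial.X ^ (d-j)).coeff (d-i) = c i := by
  rw [Polynomial.finset_sum_coeff]
  rw [Finset.sum_eq_single i]
  · rw [Polynomial.coeff_C_mul, Polynomial.coeff_X_pow, if_pos rfl, mul_one]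
  · intro j hj hne
    have hj' : j ≤ d := by have := Finset.mem_range.1 hj; omega
    rw [Polynomial.coeff_C_mul, Polynomial.coeff_X_pow, if_neg (by omega), mul_zero]
  · intro hni
    exact absurd (Finset.mem_range.2 (by omega)) hni


/-- Corollary 3.7/3.8: the h-vector of `P_n`, defined by
`P_n(x−1) = Σ_{i=0}^{⌊(n−1)/2⌋} h_{n,i} x^{⌊(n−1)/2⌋−i}`, is given by
`h_{n,i} = ((⌊n/2⌋ − i)/(⌊n/2⌋ + i))·C(⌊n/2⌋ + i, ⌊n/2⌋)`. -/
theorem Pn_h_vector (n : ℕ) (hn : 3 ≤ n) (h : ℕ → ℚ)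
    (hdef : (fpoly n).comp (Polynomial.X - 1) =
      ∑ i ∈ Finset.range ((n - 1) / 2 + 1),
        Polynomial.C (h i) * Polynomial.X ^ ((n - 1) / 2 - i)) :
    ∀ i : ℕ, i ≤ (n - 1) / 2 →
      h i = (((n / 2 : ℕ) : ℚ) - (i : ℚ)) / (((n / 2 : ℕ) : ℚ) + (i : ℚ)) *
        (Nat.choose (n / 2 + i) (n / 2) : ℚ) := by
  intro i hi
  set d := (n-1)/2 with hddef
  set m := n/2 with hmdef
  have hd1 : 1 ≤ d := by omega
  have hm1 : 1 ≤ m := by omega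
  have hmd : m + d + 1 = n := by omega
  set g : ℕ → ℚ := fun i => ((m:ℚ) - (i:ℚ))/((m:ℚ) + (i:ℚ)) * (Nat.choose (m+i) m : ℚ)
    with hgdef
  -- step 1 : fpoly n equals Σ C (g i) (X+1)^(d-i)
  have hfp : fpoly n = ∑ i ∈ Finset.range (d+1),
      Polynomial.C (g i) * (Polynomial.X + 1) ^ (d-i) := by
    rw [fpoly, ← hddef]
    apply Polynomial.ext
    intro t
    rw [Polynomial.finset_sum_coeff, Polynomial.finset_sum_coeff]
    simp only [Polynomial.coeff_C_mul, Polynomial.coeff_X_pow, Polynomial.coeff_X_add_one_pow]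
    by_cases ht : t ≤ d
    · -- LHS is pcount n (d - t)
      set j0 := d - t with hj0def
      have hj0 : j0 ≤ d := by omega
      have hLHS : ∑ j ∈ Finset.range (d+1),
          (pcount n j : ℚ) * (if t = d - j then 1 else 0) = (pcount n j0 : ℚ) := by
        rw [Finset.sum_eq_single j0]
        · rw [if_pos (by omega), mul_one]
        · intro j hj hne
          have : j ≤ d := by have := Finset.mem_range.1 hj; omega
          rw [if_neg (by omega), mul_zero]
        · intro hni
          exact absurd (Finset.mem_range.2 (by omega)) hni
      rw [hLHS]
      have ht' : t = d - j0 := by omega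
      rw [ht']
      rcases Nat.eq_zero_or_pos j0 with hj00 | hj0pos
      · -- j0 = 0
        rw [hj00]
        have hRHS : ∑ x ∈ Finset.range (d+1), g x * ((Nat.choose (d-x) (d-0)):ℚ) = 1 := by
          rw [Finset.sum_eq_single 0]
          · have hne : ((m:ℚ)) ≠ 0 := Nat.cast_ne_zero.2 (by omega)
            simp [hgdef, Nat.choose_self, div_self hne]
          · intro x hx hne
            have hx' : x ≤ d := by have := Finset.mem_range.1 hx; omega
            have : Nat.choose (d-x) (d-0) = 0 := Nat.choose_eq_zero_of_lt (by omega)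
            rw [this, Nat.cast_zero, mul_zero]
          · intro hni
            exact absurd (Finset.mem_range.2 (by omega)) hni
        rw [hRHS, pcount_zero, Nat.cast_one]
      · -- j0 ≥ 1
        have hkey := key_sum_arith m d hm1 j0 hj0pos hj0
        have : ∑ x ∈ Finset.range (d+1), g x * ((Nat.choose (d-x) (d-j0)):ℚ)
            = (Nat.choose (m+d+1) j0 : ℚ) - 2 * (Nat.choose (m+d) (j0-1) : ℚ) := hkey
        rw [this, hmd, show m + d = n - 1 from by omega]
        obtain ⟨k, hk⟩ : ∃ k, j0 = k+1 := ⟨j0-1, by omega⟩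
        rw [hk]
        have hf := pcount_formula n k (by omega)
        have : ((pcount n (k+1) : ℕ) : ℚ) + 2 * ((Nat.choose (n-1) k : ℕ) : ℚ)
            = ((Nat.choose n (k+1) : ℕ) : ℚ) := by exact_mod_cast hf
        rw [Nat.add_sub_cancel]
        linarith [this]
    · -- t > d : both sides vanish
      rw [Finset.sum_eq_zero, Finset.sum_eq_zero]
      · intro x hx
        have hx' : x ≤ d := by have := Finset.mem_range.1 hx; omega
        have : Nat.choose (d-x) t = 0 := Nat.choose_eq_zero_of_lt (by omega)
        rw [this, Nat.cast_zero, mul_zero]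
      · intro x hx
        have hx' : x ≤ d := by have := Finset.mem_range.1 hx; omega
        rw [if_neg (by omega), mul_zero]
  -- step 2 : G = Σ C (h i) X^(d-i)
  set G : Polynomial ℚ := ∑ i ∈ Finset.range (d+1), Polynomial.C (g i) * Polynomial.X ^ (d-i)
    with hGdef
  have hcomp : G.comp (Polynomial.X + 1) = ∑ i ∈ Finset.range (d+1),
      Polynomial.C (g i) * (Polynomial.X + 1) ^ (d-i) := by
    rw [hGdef]
    show Polynomial.eval₂ Polynomial.C (Polynomial.X + 1) _ = _
    rw [Polynomial.eval₂_finset_sum]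
    apply Finset.sum_congr rfl
    intro x hx
    rw [Polynomial.eval₂_mul, Polynomial.eval₂_C, Polynomial.eval₂_X_pow]
  have hG : G = ∑ i ∈ Finset.range (d+1), Polynomial.C (h i) * Polynomial.X ^ (d-i) := by
    have hd2 := hdef
    rw [hfp, ← hcomp, Polynomial.comp_assoc] at hd2
    have hXX : (Polynomial.X + 1 : Polynomial ℚ).comp (Polynomial.X - 1) = Polynomial.X := by
      rw [Polynomial.add_comp, Polynomial.X_comp, Polynomial.one_comp]
      ring
    rw [hXX, Polynomial.comp_X] at hd2
    exact hd2
  -- step 3 : extract coefficients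
  have h1 : G.coeff (d-i) = g i := by rw [hGdef]; exact coeff_extract d g i hi
  have h2 : G.coeff (d-i) = h i := by rw [hG]; exact coeff_extract d h i hi
  rw [← h2, h1, hgdef]
end

section
/- Let n ≥ 3 and define h_{n,i} by the polynomial identity P_n(x−1) = Σ_{i=0}^{⌊(n−1)/2⌋} h_{n,i} x^{⌊(n−1)/2⌋ − i}, where P_n(x) is the f-polynomial of P_n. Set ε(n) = 1 if n is odd and ε(n) = 0 if n is even, and let c_m = C(2m, m)/(m+1) denote the m-th Catalan number. Then h_{n+1,0} = h_{n,0}; h_{n+1,i} = h_{n,i} + ε(n)·h_{n+1,i−1} for 1 ≤ i ≤ ⌊n/2⌋ − 1; and h_{n+1,⌊n/2⌋} = ε(n)·c_{⌊n/2⌋}; with initial conditions h_{3,0} = 1 and h_{3,1} = 0. -/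
open Finset Polynomial

/-- The `j`-th smallest element of `A` (1-indexed). -/
noncomputable def nth (A : Finset ℕ) (j : ℕ) : ℕ :=
  (A.sort (· ≤ ·)).getD (j - 1) 0

lemma nth_mem {A : Finset ℕ} {j : ℕ} (h1 : 1 ≤ j) (h2 : j ≤ A.card) : nth A j ∈ A := by
  have hl : j - 1 < (A.sort (· ≤ ·)).length := by
    rw [Finset.length_sort]; omega
  rw [nth, List.getD_eq_getElem _ _ hl]
  exact (Finset.mem_sort (· ≤ ·)).1 (List.getElem_mem hl)

lemma nth_lt_nth {A : Finset ℕ} {i j : ℕ} (h1 : 1 ≤ i) (hij : i < j) (h2 : j ≤ A.card) :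
    nth A i < nth A j := by
  have hj : j - 1 < (A.sort (· ≤ ·)).length := by rw [Finset.length_sort]; omega
  have hi : i - 1 < (A.sort (· ≤ ·)).length := by rw [Finset.length_sort]; omega
  rw [nth, nth, List.getD_eq_getElem _ _ hi, List.getD_eq_getElem _ _ hj]
  exact (Finset.sortedLT_sort A).getElem_lt_getElem_iff.2 (by omega)

lemma nth_le_nth {A : Finset ℕ} {i j : ℕ} (h1 : 1 ≤ i) (hij : i ≤ j) (h2 : j ≤ A.card) :
    nth A i ≤ nth A j := by
  rcases eq_or_lt_of_le hij with rfl | hlt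
  · exact le_rfl
  · exact (nth_lt_nth h1 hlt h2).le

lemma nth_surj {A : Finset ℕ} {a : ℕ} (ha : a ∈ A) :
    ∃ j, 1 ≤ j ∧ j ≤ A.card ∧ nth A j = a := by
  have : a ∈ A.sort (· ≤ ·) := (Finset.mem_sort (· ≤ ·)).2 ha
  obtain ⟨⟨m, hm⟩, hget⟩ := List.mem_iff_get.1 this
  refine ⟨m + 1, by omega, by rw [← Finset.length_sort (· ≤ ·) (s := A)]; omega, ?_⟩
  rw [nth, Nat.add_sub_cancel, List.getD_eq_getElem _ _ hm]
  simpa [List.get_eq_getElem] using hget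

lemma nth_inj {A : Finset ℕ} {i j : ℕ} (h1 : 1 ≤ i) (h1' : 1 ≤ j)
    (h2 : i ≤ A.card) (h2' : j ≤ A.card) (h : nth A i = nth A j) : i = j := by
  rcases lt_trichotomy i j with hlt | he | hlt
  · exact absurd h (nth_lt_nth h1 hlt h2').ne
  · exact he
  · exact absurd h.symm (nth_lt_nth h1' hlt h2).ne

/-- If at least `m` elements of `A` are `≤ x`, then the `m`-th smallest is `≤ x`. -/
lemma nth_le_of_count {A : Finset ℕ} {x m : ℕ} (h1 : 1 ≤ m)
    (hc : m ≤ (A.filter (· ≤ x)).card) : nth A m ≤ x := by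
  by_contra hx
  push_neg at hx
  have hmA : m ≤ A.card := hc.trans (Finset.card_filter_le _ _)
  have hsub : A.filter (· ≤ x) ⊆ (Finset.Icc 1 (m - 1)).image (nth A) := by
    intro b hb
    rw [Finset.mem_filter] at hb
    obtain ⟨j, hj1, hj2, rfl⟩ := nth_surj hb.1
    have hjm : j ≤ m - 1 := by
      by_contra hjm
      push_neg at hjm
      have : m ≤ j := by omega
      exact absurd (le_trans (nth_le_nth h1 this hj2) hb.2) (not_le.2 hx)
    exact Finset.mem_image.2 ⟨j, Finset.mem_Icc.2 ⟨hj1, hjm⟩, rfl⟩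
  have := (Finset.card_le_card hsub).trans (Finset.card_image_le)
  rw [Nat.card_Icc] at this
  omega

lemma CP_cond {n : ℕ} {σ : ℕ → ℕ} (hσ : IsPermOn n σ) :
    ∀ s ∈ CP n σ, 2 * ((CP n σ).filter (· ≤ s)).card < s := by
  intro s hs
  classical
  obtain ⟨i0, hi0mem, hi0⟩ := Finset.mem_image.1 hs
  rw [Finset.mem_filter] at hi0mem
  obtain ⟨hi0Icc, hpk0⟩ := hi0mem
  rw [Finset.mem_Icc] at hi0Icc
  have hn3 : 3 ≤ n := by omega
  -- peak positions with value ≤ s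
  set P : Finset ℕ := (Finset.Icc 2 (n - 1)).filter
    (fun p => (σ (p - 1) < σ p ∧ σ (p + 1) < σ p) ∧ σ p ≤ s) with hP
  -- positions with value ≤ s
  set T : Finset ℕ := (Finset.Icc 1 n).filter (fun p => σ p ≤ s) with hT
  have hPmem : ∀ p ∈ P, 2 ≤ p ∧ p ≤ n - 1 ∧ σ (p - 1) < σ p ∧ σ (p + 1) < σ p ∧ σ p ≤ s := by
    intro p hp
    rw [hP, Finset.mem_filter, Finset.mem_Icc] at hp
    tauto
  have hinj : Set.InjOn σ (Set.Icc 1 n) := hσ.injOn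
  -- s ∈ Icc 1 n
  have hsIcc : 1 ≤ s ∧ s ≤ n := by
    have : σ i0 ∈ Set.Icc 1 n := hσ.mapsTo (by simp [Set.mem_Icc]; omega)
    rw [hi0] at this; simpa using this
  -- (a) the filtered CP is the image of P
  have ha : (CP n σ).filter (· ≤ s) = P.image σ := by
    rw [CP, Finset.filter_image]
    congr 1
    rw [Finset.filter_filter]
  -- (b) card of image = card P
  have hb : (P.image σ).card = P.card := by
    apply Finset.card_image_of_injOn
    intro a haP b hbP hab
    have h1 := hPmem a haP; have h2 := hPmem b hbP
    exact hinj (by simp [Set.mem_Icc]; omega) (by simp [Set.mem_Icc]; omega) hab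
  -- (c) card T = s
  have hc : T.card = s := by
    have hIs : (Finset.Icc 1 s).card = s := by rw [Nat.card_Icc]; omega
    rw [← hIs]
    apply Finset.card_bij (fun p _ => σ p)
    · intro p hp
      rw [hT, Finset.mem_filter, Finset.mem_Icc] at hp
      have : σ p ∈ Set.Icc 1 n := hσ.mapsTo (by simp [Set.mem_Icc]; omega)
      simp [Set.mem_Icc] at this
      rw [Finset.mem_Icc]; omega
    · intro a haT b hbT hab
      rw [hT, Finset.mem_filter, Finset.mem_Icc] at haT hbT
      exact hinj (by simp [Set.mem_Icc]; omega) (by simp [Set.mem_Icc]; omega) hab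
    · intro v hv
      rw [Finset.mem_Icc] at hv
      obtain ⟨p, hp, hpv⟩ := hσ.surjOn (a := v) (by simp [Set.mem_Icc]; omega)
      simp [Set.mem_Icc] at hp
      exact ⟨p, by rw [hT, Finset.mem_filter, Finset.mem_Icc]; omega, hpv⟩
  -- P is nonempty
  have hPne : P.Nonempty := ⟨i0, by rw [hP, Finset.mem_filter, Finset.mem_Icc]
                                    exact ⟨⟨hi0Icc.1, hi0Icc.2⟩, hpk0, le_of_eq hi0⟩⟩
  set p0 := P.min' hPne with hp0
  have hp0P : p0 ∈ P := P.min'_mem hPne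
  have hp0min : ∀ p ∈ P, p0 ≤ p := fun p hp => P.min'_le p hp
  obtain ⟨hp02, hp0n, _, _, _⟩ := hPmem p0 hp0P
  -- the three pieces are in T
  have hPT : P ⊆ T := by
    intro p hp
    obtain ⟨h1, h2, h3, h4, h5⟩ := hPmem p hp
    rw [hT, Finset.mem_filter, Finset.mem_Icc]; omega
  have hP1T : P.image (· + 1) ⊆ T := by
    intro q hq
    obtain ⟨p, hp, rfl⟩ := Finset.mem_image.1 hq
    obtain ⟨h1, h2, h3, h4, h5⟩ := hPmem p hp
    rw [hT, Finset.mem_filter, Finset.mem_Icc]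
    exact ⟨⟨by omega, by omega⟩, by omega⟩
  have hm1T : p0 - 1 ∈ T := by
    obtain ⟨h1, h2, h3, h4, h5⟩ := hPmem p0 hp0P
    rw [hT, Finset.mem_filter, Finset.mem_Icc]
    exact ⟨⟨by omega, by omega⟩, by omega⟩
  -- disjointness
  have hd1 : Disjoint P (P.image (· + 1)) := by
    rw [Finset.disjoint_right]
    intro q hq hqP
    obtain ⟨p, hp, rfl⟩ := Finset.mem_image.1 hq
    obtain ⟨_, _, h3, h4, _⟩ := hPmem p hp
    obtain ⟨_, _, h3', _, _⟩ := hPmem _ hqP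
    have : p + 1 - 1 = p := by omega
    rw [this] at h3'
    omega
  have hd2 : p0 - 1 ∉ P ∪ P.image (· + 1) := by
    rw [Finset.mem_union]
    rintro (hmem | hmem)
    · exact absurd (hp0min _ hmem) (by omega)
    · obtain ⟨p, hp, hpe⟩ := Finset.mem_image.1 hmem
      obtain ⟨hq2, _, _, _, _⟩ := hPmem p hp
      have := hp0min _ hp
      omega
  -- count
  have hunion : (P ∪ P.image (· + 1)) ∪ {p0 - 1} ⊆ T := by
    intro x hx
    rw [Finset.mem_union, Finset.mem_union, Finset.mem_singleton] at hx
    rcases hx with (hx | hx) | rfl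
    · exact hPT hx
    · exact hP1T hx
    · exact hm1T
  have hcard1 : (P.image (· + 1)).card = P.card :=
    Finset.card_image_of_injective _ (fun a b => by omega)
  have hcard : ((P ∪ P.image (· + 1)) ∪ {p0 - 1}).card = 2 * P.card + 1 := by
    rw [Finset.card_union_of_disjoint (by simpa using hd2),
        Finset.card_union_of_disjoint hd1, hcard1, Finset.card_singleton]
    ring
  have := Finset.card_le_card hunion
  rw [hcard, hc] at this
  rw [ha, hb]
  omega

/-- The permutation realizing a prescribed circular peak set. -/
noncomputable def buildPerm (n : ℕ) (S : Finset ℕ) : ℕ → ℕ := fun i =>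
  if i ≤ 2 * S.card then
    (if i % 2 = 1 then nth ((Finset.Icc 1 n) \ S) ((i + 1) / 2) else nth S (i / 2))
  else nth ((Finset.Icc 1 n) \ S) (i - S.card)

lemma cond_realizable {n : ℕ} {S : Finset ℕ} (hS : S ⊆ Finset.Icc 1 n)
    (hcond : ∀ s ∈ S, 2 * (S.filter (· ≤ s)).card < s) :
    IsPermOn n (buildPerm n S) ∧ CP n (buildPerm n S) = S := by
  classical
  set k := S.card with hk
  set W := (Finset.Icc 1 n) \ S with hW
  set σ := buildPerm n S with hσdef
  have hScard : ∀ s ∈ S, 1 ≤ s ∧ s ≤ n := by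
    intro s hs; have := hS hs; rw [Finset.mem_Icc] at this; exact this
  have hWcard : W.card = n - k := by
    rw [hW, Finset.card_sdiff_of_subset hS, Nat.card_Icc]; omega
  -- rank bound
  have hrank : ∀ j, 1 ≤ j → j ≤ k → j ≤ (S.filter (· ≤ nth S j)).card := by
    intro j hj1 hj2
    have hsub : (Finset.Icc 1 j).image (nth S) ⊆ S.filter (· ≤ nth S j) := by
      intro x hx
      obtain ⟨i, hi, rfl⟩ := Finset.mem_image.1 hx
      rw [Finset.mem_Icc] at hi
      exact Finset.mem_filter.2 ⟨nth_mem hi.1 (hi.2.trans hj2),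
        nth_le_nth hi.1 hi.2 hj2⟩
    have hcardim : ((Finset.Icc 1 j).image (nth S)).card = j := by
      rw [Finset.card_image_of_injOn, Nat.card_Icc]; · omega
      intro a ha b hb hab
      rw [Finset.mem_coe, Finset.mem_Icc] at ha hb
      exact nth_inj ha.1 hb.1 (ha.2.trans hj2) (hb.2.trans hj2) hab
    calc j = ((Finset.Icc 1 j).image (nth S)).card := hcardim.symm
    _ ≤ _ := Finset.card_le_card hsub
  have hF1 : ∀ j, 1 ≤ j → j ≤ k → 2 * j < nth S j := by
    intro j hj1 hj2
    have := hcond (nth S j) (nth_mem hj1 hj2)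
    have := hrank j hj1 hj2
    omega
  -- count of non-members below nth S j
  have hWcount : ∀ j, 1 ≤ j → j ≤ k → j + 1 ≤ (W.filter (· ≤ nth S j)).card := by
    intro j hj1 hj2
    set s := nth S j with hs
    have hsmem : s ∈ S := nth_mem hj1 hj2
    have hsn := hScard s hsmem
    have hfW : W.filter (· ≤ s) = (Finset.Icc 1 s) \ (S.filter (· ≤ s)) := by
      ext x
      rw [hW, Finset.mem_filter, Finset.mem_sdiff, Finset.mem_sdiff,
        Finset.mem_Icc, Finset.mem_Icc, Finset.mem_filter]
      constructor
      · rintro ⟨⟨h1, h2⟩, h3⟩; exact ⟨⟨h1.1, h3⟩, fun hc => h2 hc.1⟩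
      · rintro ⟨⟨h1, h2⟩, h3⟩
        exact ⟨⟨⟨h1, h2.trans hsn.2⟩, fun hc => h3 ⟨hc, h2⟩⟩, h2⟩
    have hsubf : S.filter (· ≤ s) ⊆ Finset.Icc 1 s := by
      intro x hx
      rw [Finset.mem_filter] at hx
      rw [Finset.mem_Icc]
      exact ⟨(hScard x hx.1).1, hx.2⟩
    have hcardf : (W.filter (· ≤ s)).card = s - (S.filter (· ≤ s)).card := by
      rw [hfW, Finset.card_sdiff_of_subset hsubf, Nat.card_Icc]; omega
    have h1 := hcond s hsmem
    have h2 := hrank j hj1 hj2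
    rw [← hs] at h2
    omega
  have hF2 : ∀ j, 1 ≤ j → j ≤ k → j + 1 ≤ W.card ∧ nth W (j + 1) < nth S j := by
    intro j hj1 hj2
    have hcnt := hWcount j hj1 hj2
    have hle : j + 1 ≤ W.card := hcnt.trans (Finset.card_filter_le _ _)
    have hle2 : nth W (j + 1) ≤ nth S j := nth_le_of_count (by omega) hcnt
    have hne : nth W (j + 1) ≠ nth S j := by
      intro he
      have h1 : nth W (j + 1) ∈ W := nth_mem (by omega) hle
      rw [hW, Finset.mem_sdiff] at h1
      exact h1.2 (he ▸ nth_mem hj1 hj2)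
    exact ⟨hle, lt_of_le_of_ne hle2 hne⟩
  have h2kn : 2 * k ≤ n := by
    rcases Nat.eq_zero_or_pos k with h0 | hpos
    · omega
    · have := hF1 k hpos le_rfl
      have := (hScard _ (nth_mem hpos le_rfl)).2
      omega
  have hwlts : ∀ j, 1 ≤ j → j ≤ k → nth W j < nth S j := by
    intro j hj1 hj2
    obtain ⟨hle, hlt⟩ := hF2 j hj1 hj2
    exact lt_trans (nth_lt_nth hj1 (by omega) hle) hlt
  -- value lemmas
  have hodd : ∀ j, 1 ≤ j → j ≤ k → σ (2 * j - 1) = nth W j := by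
    intro j hj1 hj2
    rw [hσdef, buildPerm, if_pos (by omega), if_pos (by omega)]
    congr 1
    omega
  have heven : ∀ j, 1 ≤ j → j ≤ k → σ (2 * j) = nth S j := by
    intro j hj1 hj2
    rw [hσdef, buildPerm, if_pos (by omega), if_neg (by omega)]
    congr 1
    omega
  have htail : ∀ i, 2 * k < i → σ i = nth W (i - k) := by
    intro i hi
    rw [hσdef, buildPerm, if_neg (by omega)]
  -- MapsTo
  have hmaps : Set.MapsTo σ (Set.Icc 1 n) (Set.Icc 1 n) := by
    intro i hi
    rw [Set.mem_Icc] at hi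
    have hWIcc : ∀ x ∈ W, 1 ≤ x ∧ x ≤ n := by
      intro x hx; rw [hW, Finset.mem_sdiff, Finset.mem_Icc] at hx; exact hx.1
    rcases le_or_gt i (2 * k) with hle | hgt
    · rcases Nat.even_or_odd i with he | ho
      · set j := i / 2 with hj
        have hji : i = 2 * j := by obtain ⟨m, hm⟩ := he; omega
        have hj1 : 1 ≤ j := by omega
        have hj2 : j ≤ k := by omega
        rw [Set.mem_Icc, hji, heven j hj1 hj2]
        exact hScard _ (nth_mem hj1 hj2)
      · set j := (i + 1) / 2 with hj
        have hji : i = 2 * j - 1 := by obtain ⟨m, hm⟩ := ho; omega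
        have hj1 : 1 ≤ j := by omega
        have hj2 : j ≤ k := by obtain ⟨m, hm⟩ := ho; omega
        rw [Set.mem_Icc, hji, hodd j hj1 hj2]
        exact hWIcc _ (nth_mem hj1 (by omega))
    · rw [Set.mem_Icc, htail i hgt]
      exact hWIcc _ (nth_mem (by omega) (by omega))
  -- SurjOn
  have hsurj : Set.SurjOn σ (Set.Icc 1 n) (Set.Icc 1 n) := by
    intro v hv
    rw [Set.mem_Icc] at hv
    rw [Set.mem_image]
    by_cases hvS : v ∈ S
    · obtain ⟨j, hj1, hj2, hjv⟩ := nth_surj hvS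
      refine ⟨2 * j, ?_, ?_⟩
      · rw [Set.mem_Icc]
        have := hF1 j hj1 hj2
        have := (hScard v hvS).2
        omega
      · rw [heven j hj1 hj2]; exact hjv
    · have hvW : v ∈ W := by rw [hW, Finset.mem_sdiff, Finset.mem_Icc]; exact ⟨⟨hv.1, hv.2⟩, hvS⟩
      obtain ⟨j, hj1, hj2, hjv⟩ := nth_surj hvW
      rcases le_or_gt j k with hjk | hjk
      · refine ⟨2 * j - 1, ?_, ?_⟩
        · rw [Set.mem_Icc]; omega
        · rw [hodd j hj1 hjk]; exact hjv
      · refine ⟨j + k, ?_, ?_⟩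
        · rw [Set.mem_Icc]
          rw [hWcard] at hj2
          omega
        · rw [htail (j + k) (by omega)]
          simpa using hjv
  have hperm : IsPermOn n σ := by
    rw [IsPermOn, ← (Set.finite_Icc 1 n).surjOn_iff_bijOn_of_mapsTo hmaps]
    exact hsurj
  -- peak characterization
  have hn3 : ∀ i, 2 ≤ i → i ≤ n - 1 → (3 ≤ n) := by intro i h1 h2; omega
  have hnopeak_odd : ∀ i, 2 ≤ i → i ≤ n - 1 → i % 2 = 1 → i ≤ 2 * k → σ i < σ (i + 1) := by
    intro i h1 h2 hmod hle
    set j := (i + 1) / 2 with hj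
    have hji : i = 2 * j - 1 := by omega
    have hji' : i + 1 = 2 * j := by omega
    have hj1 : 1 ≤ j := by omega
    have hj2 : j ≤ k := by omega
    rw [hji, hodd j hj1 hj2, ← hji, hji', heven j hj1 hj2]
    exact hwlts j hj1 hj2
  have hnopeak_tail : ∀ i, 2 ≤ i → i ≤ n - 1 → 2 * k < i → σ i < σ (i + 1) := by
    intro i h1 h2 hgt
    rw [htail i hgt, htail (i + 1) (by omega)]
    apply nth_lt_nth (by omega) (by omega)
    rw [hWcard]
    omega
  have hpeak_even : ∀ i, 2 ≤ i → i % 2 = 0 → i ≤ 2 * k →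
      σ (i - 1) < σ i ∧ σ (i + 1) < σ i := by
    intro i h1 hmod hle
    set j := i / 2 with hj
    have hji : i = 2 * j := by omega
    have hj1 : 1 ≤ j := by omega
    have hj2 : j ≤ k := by omega
    have hival : σ i = nth S j := by rw [hji]; exact heven j hj1 hj2
    have hleft : σ (i - 1) = nth W j := by
      have : i - 1 = 2 * j - 1 := by omega
      rw [this]; exact hodd j hj1 hj2
    constructor
    · rw [hleft, hival]; exact hwlts j hj1 hj2
    · rcases lt_or_eq_of_le hle with hlt | heq
      · have : i + 1 = 2 * (j + 1) - 1 := by omega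
        rw [this, hodd (j + 1) (by omega) (by omega), hival]
        exact (hF2 j hj1 hj2).2
      · rw [htail (i + 1) (by omega), hival]
        have : i + 1 - k = k + 1 := by omega
        rw [this]
        have := (hF2 j hj1 hj2).2
        have hjk : j = k := by omega
        rw [hjk]
        exact (hF2 k (by omega) le_rfl).2
  -- CP = S
  have hCP : CP n σ = S := by
    ext x
    rw [CP, Finset.mem_image]
    constructor
    · rintro ⟨i, hi, rfl⟩
      rw [Finset.mem_filter, Finset.mem_Icc] at hi
      obtain ⟨⟨h1, h2⟩, hp1, hp2⟩ := hi
      -- must be even and ≤ 2k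
      have heven_i : i % 2 = 0 ∧ i ≤ 2 * k := by
        rcases le_or_gt i (2 * k) with hle | hgt
        · rcases Nat.mod_two_eq_zero_or_one i with h | h
          · exact ⟨h, hle⟩
          · exact absurd hp2 (by have := hnopeak_odd i h1 h2 h hle; omega)
        · exact absurd hp2 (by have := hnopeak_tail i h1 h2 hgt; omega)
      obtain ⟨hmod, hle⟩ := heven_i
      set j := i / 2 with hj
      have hji : i = 2 * j := by omega
      rw [hji, heven j (by omega) (by omega)]
      exact nth_mem (by omega) (by omega)
    · intro hx
      obtain ⟨j, hj1, hj2, hjx⟩ := nth_surj hx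
      refine ⟨2 * j, ?_, ?_⟩
      · rw [Finset.mem_filter, Finset.mem_Icc]
        have hFj := hF1 j hj1 hj2
        have hxn := (hScard x hx).2
        have hIcc : 2 ≤ 2 * j ∧ 2 * j ≤ n - 1 := by omega
        exact ⟨⟨hIcc.1, hIcc.2⟩, hpeak_even (2 * j) (by omega) (by omega) (by omega)⟩
      · rw [heven j hj1 hj2]; exact hjx
  exact ⟨hperm, hCP⟩

lemma mem_Pn_iff {n : ℕ} (S : Finset ℕ) :
    S ∈ Pn n ↔ S ⊆ Finset.Icc 1 n ∧ ∀ s ∈ S, 2 * (S.filter (· ≤ s)).card < s := by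
  classical
  rw [Pn, Finset.mem_filter, Finset.mem_powerset]
  constructor
  · rintro ⟨hsub, σ, hσ, hCP⟩
    exact ⟨hsub, by rw [← hCP]; exact CP_cond hσ⟩
  · rintro ⟨hsub, hcond⟩
    exact ⟨hsub, buildPerm n S, cond_realizable hsub hcond⟩

open scoped Classical in
noncomputable def Acnt (n k : ℕ) : ℕ :=
  ((Finset.Icc 1 n).powerset.filter
    (fun S => S.card = k ∧ ∀ s ∈ S, 2 * (S.filter (· ≤ s)).card < s)).card

lemma pcount_eq_Acnt (n k : ℕ) : pcount n k = Acnt n k := by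
  classical
  rw [pcount, Acnt]
  congr 1
  ext S
  rw [Finset.mem_filter, Finset.mem_filter, Finset.mem_powerset, mem_Pn_iff]
  tauto

lemma Acnt_zero (n : ℕ) : Acnt n 0 = 1 := by
  classical
  rw [Acnt]
  rw [Finset.card_eq_one]
  refine ⟨∅, ?_⟩
  ext S
  rw [Finset.mem_filter, Finset.mem_powerset, Finset.mem_singleton]
  constructor
  · rintro ⟨_, hc, _⟩; exact Finset.card_eq_zero.1 hc
  · rintro rfl; simp

lemma Acnt_big {n k : ℕ} (hk : 1 ≤ k) (h : n ≤ 2 * k) : Acnt n k = 0 := by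
  classical
  rw [Acnt, Finset.card_eq_zero, Finset.filter_eq_empty_iff]
  rintro S hS ⟨hcard, hcond⟩
  rw [Finset.mem_powerset] at hS
  have hne : S.Nonempty := Finset.card_pos.1 (by omega)
  set s := S.max' hne with hs
  have hsmem : s ∈ S := S.max'_mem hne
  have hsn : s ≤ n := (Finset.mem_Icc.1 (hS hsmem)).2
  have hfl : S.filter (· ≤ s) = S := by
    apply Finset.filter_true_of_mem
    intro x hx
    exact S.le_max' x hx
  have h2 := hcond s hsmem
  rw [hfl] at h2
  omega

lemma Acnt_succ {n k : ℕ} (hk : 1 ≤ k) (h2k : 2 * k ≤ n) :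
    Acnt (n + 1) k = Acnt n k + Acnt n (k - 1) := by
  classical
  rw [Acnt, Acnt, Acnt]
  set Q : Finset ℕ → Prop := fun S => S.card = k ∧ ∀ s ∈ S, 2 * (S.filter (· ≤ s)).card < s
    with hQ
  rw [← Finset.card_filter_add_card_filter_not
    (p := fun S => (n+1) ∉ S) (s := (Finset.Icc 1 (n+1)).powerset.filter Q)]
  congr 1
  · -- sets without n+1 : equal to the n-version
    congr 1
    rw [Finset.filter_filter]
    ext S
    rw [Finset.mem_filter, Finset.mem_filter, Finset.mem_powerset, Finset.mem_powerset]
    constructor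
    · rintro ⟨hsub, hq, hnot⟩
      refine ⟨fun x hx => ?_, hq⟩
      have := hsub hx
      rw [Finset.mem_Icc] at this ⊢
      have : x ≠ n + 1 := fun he => hnot (he ▸ hx)
      omega
    · rintro ⟨hsub, hq⟩
      have hnot : (n+1) ∉ S := fun hmem => by
        have := hsub hmem; rw [Finset.mem_Icc] at this; omega
      exact ⟨fun x hx => by
        have := hsub hx; rw [Finset.mem_Icc] at this ⊢; omega, hq, hnot⟩
  · -- sets with n+1 : biject with (k-1)-sets via erase
    rw [Finset.filter_filter]
    apply Finset.card_bij (fun S _ => S.erase (n + 1))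
    · rintro S hS
      rw [Finset.mem_filter, Finset.mem_powerset] at hS
      obtain ⟨hsub, ⟨hcard, hcond⟩, hmem⟩ := hS
      rw [not_not] at hmem
      rw [Finset.mem_filter, Finset.mem_powerset]
      have hfilter_eq : ∀ s ∈ S.erase (n+1), (S.erase (n+1)).filter (· ≤ s) = S.filter (· ≤ s) := by
        intro s hs
        have hsn : s ≤ n := by
          have h1 := Finset.mem_of_mem_erase hs
          have h2 := Finset.ne_of_mem_erase hs
          have := hsub h1; rw [Finset.mem_Icc] at this; omega
        ext x
        rw [Finset.mem_filter, Finset.mem_filter, Finset.mem_erase]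
        constructor
        · rintro ⟨⟨_, hx⟩, hle⟩; exact ⟨hx, hle⟩
        · rintro ⟨hx, hle⟩
          exact ⟨⟨by omega, hx⟩, hle⟩
      refine ⟨?_, ⟨?_, ?_⟩⟩
      · intro x hx
        rw [Finset.mem_erase] at hx
        have := hsub hx.2; rw [Finset.mem_Icc] at this ⊢
        have := hx.1; omega
      · rw [Finset.card_erase_of_mem hmem, hcard]
      · intro s hs
        rw [hfilter_eq s hs]
        exact hcond s (Finset.mem_of_mem_erase hs)
    · -- injectivity
      rintro S hS T hT he
      rw [Finset.mem_filter] at hS hT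
      have h1 : (n+1) ∈ S := not_not.1 hS.2.2
      have h2 : (n+1) ∈ T := not_not.1 hT.2.2
      rw [← Finset.insert_erase h1, ← Finset.insert_erase h2, he]
    · -- surjectivity
      rintro T hT
      rw [Finset.mem_filter, Finset.mem_powerset] at hT
      obtain ⟨hsub, hcard, hcond⟩ := hT
      refine ⟨insert (n+1) T, ?_, ?_⟩
      · have hnot : (n+1) ∉ T := fun hmem => by
          have := hsub hmem; rw [Finset.mem_Icc] at this; omega
        rw [Finset.mem_filter, Finset.mem_powerset]
        have hfe : ∀ s ∈ T, (insert (n+1) T).filter (· ≤ s) = T.filter (· ≤ s) := by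
          intro s hs
          have hsn : s ≤ n := by have := hsub hs; rw [Finset.mem_Icc] at this; omega
          ext x
          rw [Finset.mem_filter, Finset.mem_filter, Finset.mem_insert]
          constructor
          · rintro ⟨hx | hx, hle⟩
            · omega
            · exact ⟨hx, hle⟩
          · rintro ⟨hx, hle⟩; exact ⟨Or.inr hx, hle⟩
        refine ⟨?_, ⟨?_, ?_⟩, not_not.2 (Finset.mem_insert_self _ _)⟩
        · intro x hx
          rw [Finset.mem_insert] at hx
          rw [Finset.mem_Icc]
          rcases hx with rfl | hx
          · omega
          · have := hsub hx; rw [Finset.mem_Icc] at this; omega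
        · rw [Finset.card_insert_of_notMem hnot]; omega
        · intro s hs
          rw [Finset.mem_insert] at hs
          rcases hs with rfl | hs
          · have hfl : (insert (n+1) T).filter (· ≤ (n+1)) = insert (n+1) T := by
              apply Finset.filter_true_of_mem
              intro x hx
              rw [Finset.mem_insert] at hx
              rcases hx with rfl | hx
              · exact le_rfl
              · have := hsub hx; rw [Finset.mem_Icc] at this; omega
            rw [hfl, Finset.card_insert_of_notMem hnot]
            omega
          · rw [hfe s hs]
            exact hcond s hs
      · rw [Finset.erase_insert (fun hmem => by
          have := hsub hmem; rw [Finset.mem_Icc] at this; omega)]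

lemma choose_pascal (m l : ℕ) :
    Nat.choose (m + 1) (l + 1) = Nat.choose m (l + 1) + Nat.choose m l := by
  exact (Nat.choose_succ_succ m l).trans (Nat.add_comm _ _)

lemma Acnt_closed : ∀ n k : ℕ, 1 ≤ k → 2 * k < n →
    Acnt n k + Nat.choose (n - 1) (k - 1) = Nat.choose (n - 1) k := by
  intro n
  induction n with
  | zero => intro k hk h; omega
  | succ n ih =>
    intro k hk h2k
    obtain ⟨l, rfl⟩ : ∃ l, k = l + 1 := ⟨k - 1, by omega⟩
    have hrec := Acnt_succ (n := n) (k := l + 1) (by omega) (by omega)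
    obtain ⟨m, rfl⟩ : ∃ m, n = m + 1 := ⟨n - 1, by omega⟩
    simp only [Nat.add_sub_cancel] at ih ⊢
    rw [hrec]
    simp only [Nat.add_sub_cancel]
    rcases Nat.lt_or_ge (2 * (l + 1)) (m + 1) with hlt | hge
    · have ih1 := ih (l + 1) (by omega) hlt
      simp only [Nat.add_sub_cancel] at ih1
      rcases Nat.eq_zero_or_pos l with rfl | hl
      · have hz := Acnt_zero (m + 1)
        have e1 : Nat.choose m 0 = 1 := Nat.choose_zero_right m
        have e2 : Nat.choose (m + 1) 0 = 1 := Nat.choose_zero_right (m + 1)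
        have hp := choose_pascal m 0
        omega
      · obtain ⟨t, rfl⟩ : ∃ t, l = t + 1 := ⟨l - 1, by omega⟩
        have ih2 := ih (t + 1) (by omega) (by omega)
        simp only [Nat.add_sub_cancel] at ih2
        have hp1 := choose_pascal m (t + 1)
        have hp2 := choose_pascal m t
        omega
    · have hbig := Acnt_big (n := m + 1) (k := l + 1) (by omega) (by omega)
      rcases Nat.eq_zero_or_pos l with rfl | hl
      · have hm : m = 1 := by omega
        subst hm
        have hz := Acnt_zero 2
        rw [hbig, hz]
        simp [Nat.choose]
      · obtain ⟨t, rfl⟩ : ∃ t, l = t + 1 := ⟨l - 1, by omega⟩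
        have ih2 := ih (t + 1) (by omega) (by omega)
        simp only [Nat.add_sub_cancel] at ih2
        have hp1 := choose_pascal m (t + 1)
        have hp2 := choose_pascal m t
        have hsymm : Nat.choose m (t + 1) = Nat.choose m (t + 1 + 1) := by
          have hm : m = 2 * t + 3 := by omega
          subst hm
          rw [← Nat.choose_symm (by omega : t + 1 ≤ 2 * t + 3)]
          have he : 2 * t + 3 - (t + 1) = t + 1 + 1 := by omega
          rw [he]
        omega


lemma pcount_rec {n k : ℕ} (hk : 1 ≤ k) (hkn : 2 * k ≤ n) :
    pcount (n + 1) k = pcount n k + pcount n (k - 1) := by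
  rw [pcount_eq_Acnt, pcount_eq_Acnt, pcount_eq_Acnt]
  exact Acnt_succ hk hkn

lemma pcount_big {n k : ℕ} (hk : 1 ≤ k) (hkn : n ≤ 2 * k) : pcount n k = 0 := by
  rw [pcount_eq_Acnt]; exact Acnt_big hk hkn

lemma pcount_closed {n k : ℕ} (hk : 1 ≤ k) (hkn : 2 * k < n) :
    pcount n k + Nat.choose (n - 1) (k - 1) = Nat.choose (n - 1) k := by
  rw [pcount_eq_Acnt]; exact Acnt_closed n k hk hkn

noncomputable def sumForm (D : ℕ) (g : ℕ → ℚ) : Polynomial ℚ :=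
  ∑ i ∈ Finset.range (D + 1), Polynomial.C (g i) * Polynomial.X ^ (D - i)

lemma coeff_sumForm (D : ℕ) (g : ℕ → ℚ) (m : ℕ) :
    (sumForm D g).coeff m = if m ≤ D then g (D - m) else 0 := by
  rw [sumForm, Polynomial.finset_sum_coeff]
  simp only [Polynomial.coeff_C_mul, Polynomial.coeff_X_pow, mul_ite, mul_one, mul_zero]
  rcases le_or_gt m D with h | h
  · rw [Finset.sum_eq_single (D - m), if_pos (by omega), if_pos h]
    · intro b hb hne
      rw [Finset.mem_range] at hb
      rw [if_neg (by omega)]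
    · intro hnot
      exact absurd (Finset.mem_range.2 (by omega)) hnot
  · rw [if_neg (by omega)]
    apply Finset.sum_eq_zero
    intro b hb
    rw [Finset.mem_range] at hb
    rw [if_neg (by omega)]

lemma fpoly_eq (n : ℕ) : fpoly n = sumForm ((n - 1) / 2) (fun i => (pcount n i : ℚ)) := rfl

lemma coeff_X_mul' (p : Polynomial ℚ) (m : ℕ) :
    (Polynomial.X * p).coeff m = if m = 0 then 0 else p.coeff (m - 1) := by
  cases m with
  | zero => simp [Polynomial.mul_coeff_zero]
  | succ m => simp [Polynomial.coeff_X_mul]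

lemma coeff_X_add_one_mul (p : Polynomial ℚ) (m : ℕ) :
    ((Polynomial.X + 1) * p).coeff m = (if m = 0 then 0 else p.coeff (m - 1)) + p.coeff m := by
  rw [add_mul, one_mul, Polynomial.coeff_add, coeff_X_mul' p m]

lemma coeff_X_sub_one_mul (p : Polynomial ℚ) (m : ℕ) :
    ((Polynomial.X - 1) * p).coeff m = (if m = 0 then 0 else p.coeff (m - 1)) - p.coeff m := by
  rw [sub_mul, one_mul, Polynomial.coeff_sub, coeff_X_mul' p m]

lemma fpoly_even {n : ℕ} (h3 : 3 ≤ n) (he : n % 2 = 0) :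
    fpoly (n + 1) = (Polynomial.X + 1) * fpoly n := by
  set D := (n - 1) / 2 with hD
  have hD1 : (n + 1 - 1) / 2 = D + 1 := by omega
  apply Polynomial.ext
  intro m
  rw [coeff_X_add_one_mul, fpoly_eq, fpoly_eq, hD1, coeff_sumForm, coeff_sumForm, coeff_sumForm]
  rcases Nat.eq_zero_or_pos m with rfl | hm
  · rw [if_pos (by omega), if_pos rfl, if_pos (by omega)]
    have h1 := pcount_rec (n := n) (k := D + 1) (by omega) (by omega)
    have h2 := pcount_big (n := n) (k := D + 1) (by omega) (by omega)
    have e1 : D + 1 - 0 = D + 1 := by omega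
    have e2 : D - 0 = D := by omega
    have e3 : D + 1 - 1 = D := by omega
    rw [e1, e2]
    rw [h1, h2, e3]
    push_cast
    ring
  · rcases le_or_gt m D with hmD | hmD
    · rw [if_pos (by omega), if_neg (by omega), if_pos (by omega), if_pos hmD]
      have h1 := pcount_rec (n := n) (k := D + 1 - m) (by omega) (by omega)
      have e1 : D - (m - 1) = D + 1 - m := by omega
      have e2 : D + 1 - m - 1 = D - m := by omega
      rw [e1, h1, e2]
      push_cast
      ring
    · rcases Nat.eq_or_lt_of_le (show D + 1 ≤ m by omega) with heq | hgt
      · rw [if_pos (by omega), if_neg (by omega), if_pos (by omega), if_neg (by omega)]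
        have e1 : D + 1 - m = 0 := by omega
        have e2 : D - (m - 1) = 0 := by omega
        rw [e1, e2, pcount_zero, pcount_zero]
        push_cast
        ring
      · rw [if_neg (by omega), if_neg (by omega), if_neg (by omega), if_neg (by omega)]
        ring
  
lemma fpoly_odd {n : ℕ} (h3 : 3 ≤ n) (ho : n % 2 = 1) :
    Polynomial.X * fpoly (n + 1) =
      (Polynomial.X + 1) * fpoly n - Polynomial.C ((pcount n ((n - 1) / 2) : ℚ)) := by
  set D := (n - 1) / 2 with hD
  have hD1 : (n + 1 - 1) / 2 = D := by omega
  apply Polynomial.ext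
  intro m
  rw [Polynomial.coeff_sub, coeff_X_add_one_mul, coeff_X_mul', Polynomial.coeff_C,
    fpoly_eq, fpoly_eq, hD1, coeff_sumForm, coeff_sumForm, coeff_sumForm]
  rcases Nat.eq_zero_or_pos m with rfl | hm
  · split_ifs with h1 h2 h3
    all_goals try omega
    simp [hD]
  · rcases le_or_gt m D with hmD | hmD
    · split_ifs with h1 h2 h3
      all_goals try omega
      have hr := pcount_rec (n := n) (k := D - (m - 1)) (by omega) (by omega)
      rw [hr]
      have e2 : D - (m - 1) - 1 = D - m := by omega
      rw [e2]
      push_cast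
      ring
    · rcases Nat.eq_or_lt_of_le (show D + 1 ≤ m by omega) with heq | hgt
      · split_ifs with h1 h2 h3
        all_goals try omega
        have e1 : D - (m - 1) = 0 := by omega
        rw [e1, pcount_zero, pcount_zero]
        norm_num
      · split_ifs with h1 h2 h3
        all_goals try omega
        norm_num

lemma comp_even {n : ℕ} (h3 : 3 ≤ n) (he : n % 2 = 0) :
    (fpoly (n + 1)).comp (Polynomial.X - 1) =
      Polynomial.X * (fpoly n).comp (Polynomial.X - 1) := by
  rw [fpoly_even h3 he, Polynomial.mul_comp, Polynomial.add_comp, Polynomial.X_comp,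
    Polynomial.one_comp]
  ring

lemma comp_odd {n : ℕ} (h3 : 3 ≤ n) (ho : n % 2 = 1) :
    (Polynomial.X - 1) * (fpoly (n + 1)).comp (Polynomial.X - 1) =
      Polynomial.X * (fpoly n).comp (Polynomial.X - 1)
        - Polynomial.C ((pcount n ((n - 1) / 2) : ℚ)) := by
  have hcomp := congrArg (fun p => Polynomial.comp p (Polynomial.X - 1)) (fpoly_odd h3 ho)
  simp only [Polynomial.mul_comp, Polynomial.sub_comp, Polynomial.add_comp,
    Polynomial.X_comp, Polynomial.one_comp, Polynomial.C_comp] at hcomp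
  rw [hcomp]
  ring

lemma h_extract {D : ℕ} {g : ℕ → ℚ} {p : Polynomial ℚ} (hp : p = sumForm D g)
    {i : ℕ} (hi : i ≤ D) : p.coeff (D - i) = g i := by
  rw [hp, coeff_sumForm, if_pos (by omega)]
  congr 1
  omega

lemma h_extract_zero {D : ℕ} {g : ℕ → ℚ} {p : Polynomial ℚ} (hp : p = sumForm D g)
    {j : ℕ} (hj : D < j) : p.coeff j = 0 := by
  rw [hp, coeff_sumForm, if_neg (by omega)]

lemma pcount_top {D : ℕ} (hD : 1 ≤ D) :
    (pcount (2 * D + 1) D : ℚ) = (Nat.choose (2 * D) D : ℚ) / ((D : ℚ) + 1) := by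
  have h1 := pcount_closed (n := 2 * D + 1) (k := D) hD (by omega)
  have e : 2 * D + 1 - 1 = 2 * D := by omega
  rw [e] at h1
  have h2 : Nat.choose (2 * D) D * D = Nat.choose (2 * D) (D - 1) * (D + 1) := by
    have hh := Nat.choose_succ_right_eq (2 * D) (D - 1)
    have e2 : D - 1 + 1 = D := by omega
    rw [e2] at hh
    have e3 : 2 * D - (D - 1) = D + 1 := by omega
    rw [e3] at hh
    exact hh
  have hq1 : (pcount (2 * D + 1) D : ℚ) + (Nat.choose (2 * D) (D - 1) : ℚ)
      = (Nat.choose (2 * D) D : ℚ) := by exact_mod_cast h1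
  have hq2 : (Nat.choose (2 * D) D : ℚ) * (D : ℚ)
      = (Nat.choose (2 * D) (D - 1) : ℚ) * ((D : ℚ) + 1) := by exact_mod_cast h2
  have hpos : ((D : ℚ) + 1) ≠ 0 := by positivity
  rw [eq_div_iff hpos]
  linear_combination ((D : ℚ) + 1) * hq1 + hq2


/-- Corollary 3.8: recurrence for the h-vector of `P_n` (with `ε(n) = 1` for odd `n`,
`ε(n) = 0` for even `n`, and `c_m = C(2m, m)/(m+1)` the Catalan numbers), with
initial conditions `h_{3,0} = 1`, `h_{3,1} = 0`. -/
theorem Pn_h_vector_recurrence (n : ℕ) (hn : 3 ≤ n) (h : ℕ → ℕ → ℚ)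
    (hdef : ∀ m : ℕ, 3 ≤ m → (fpoly m).comp (Polynomial.X - 1) =
      ∑ i ∈ Finset.range ((m - 1) / 2 + 1),
        Polynomial.C (h m i) * Polynomial.X ^ ((m - 1) / 2 - i)) :
    h 3 0 = 1 ∧ h 3 1 = 0 ∧
    h (n + 1) 0 = h n 0 ∧
    (∀ i : ℕ, 1 ≤ i → i + 1 ≤ n / 2 →
      h (n + 1) i = h n i + (if Odd n then 1 else 0) * h (n + 1) (i - 1)) ∧
    h (n + 1) (n / 2) =
      (if Odd n then 1 else 0) *
        ((Nat.choose (2 * (n / 2)) (n / 2) : ℚ) / (((n / 2 : ℕ) : ℚ) + 1)) := by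
  have hdef' : ∀ m : ℕ, 3 ≤ m → (fpoly m).comp (Polynomial.X - 1) =
      sumForm ((m - 1) / 2) (h m) := hdef
  have hc : ∀ m : ℕ, 3 ≤ m → ∀ i : ℕ, i ≤ (m - 1) / 2 →
      ((fpoly m).comp (Polynomial.X - 1)).coeff ((m - 1) / 2 - i) = h m i :=
    fun m hm i hi => h_extract (hdef' m hm) hi
  have hz : ∀ m : ℕ, 3 ≤ m → ∀ j : ℕ, (m - 1) / 2 < j →
      ((fpoly m).comp (Polynomial.X - 1)).coeff j = 0 :=
    fun m hm j hj => h_extract_zero (hdef' m hm) hj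
  -- initial values
  have hp30 : pcount 3 0 = 1 := pcount_zero 3
  have hp31 : pcount 3 1 = 1 := by
    have hcl := pcount_closed (n := 3) (k := 1) le_rfl (by omega)
    simp [Nat.choose] at hcl
    omega
  have hf3 : fpoly 3 = Polynomial.X + 1 := by
    rw [fpoly_eq, sumForm]
    rw [Finset.sum_range_succ, Finset.sum_range_one]
    norm_num [hp30, hp31]
  have hH3 : (fpoly 3).comp (Polynomial.X - 1) = Polynomial.X := by
    rw [hf3, Polynomial.add_comp, Polynomial.X_comp, Polynomial.one_comp]
    ring
  have h30 : h 3 0 = 1 := by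
    have := hc 3 le_rfl 0 (by norm_num)
    rw [hH3] at this
    rw [← this]
    norm_num
  have h31 : h 3 1 = 0 := by
    have := hc 3 le_rfl 1 (by norm_num)
    rw [hH3] at this
    rw [← this]
    norm_num
  refine ⟨h30, h31, ?_⟩
  rcases Nat.even_or_odd n with hev | hod
  · -- n even
    have he : n % 2 = 0 := Nat.even_iff.1 hev
    have hnotodd : ¬ Odd n := by simp [Nat.odd_iff, he]
    have hrel := comp_even hn he
    have key : ∀ i : ℕ, i ≤ (n + 1 - 1) / 2 →
        h (n + 1) i = (if i ≤ (n - 1) / 2 then h n i else 0) := by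
      intro i hi
      have h1 := hc (n + 1) (by omega) i hi
      rw [hrel, coeff_X_mul'] at h1
      rcases le_or_gt i ((n - 1) / 2) with hile | higt
      · rw [if_neg (by omega)] at h1
        rw [if_pos hile, ← h1]
        have h2 := hc n hn i hile
        rw [← h2]
        congr 1
        omega
      · rw [if_pos (by omega)] at h1
        rw [if_neg (by omega), ← h1]
    refine ⟨?_, ?_, ?_⟩
    · have := key 0 (by omega)
      rw [if_pos (by omega)] at this
      exact this
    · intro i hi1 hi2
      have := key i (by omega)
      rw [if_pos (by omega)] at this
      rw [this, if_neg hnotodd]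
      ring
    · have := key (n / 2) (by omega)
      rw [if_neg (by omega)] at this
      rw [this, if_neg hnotodd]
      ring
  · -- n odd
    have ho : n % 2 = 1 := Nat.odd_iff.1 hod
    have hrel := comp_odd hn ho
    set c : ℚ := (pcount n ((n - 1) / 2) : ℚ) with hcdef
    have step : ∀ m : ℕ,
        (if m = 0 then 0 else ((fpoly (n + 1)).comp (Polynomial.X - 1)).coeff (m - 1))
          - ((fpoly (n + 1)).comp (Polynomial.X - 1)).coeff m
        = (if m = 0 then 0 else ((fpoly n).comp (Polynomial.X - 1)).coeff (m - 1))
          - (if m = 0 then c else 0) := by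
      intro m
      have hco := congrArg (fun p => Polynomial.coeff p m) hrel
      rw [coeff_X_sub_one_mul, Polynomial.coeff_sub, coeff_X_mul', Polynomial.coeff_C] at hco
      exact hco
    have hc1 : ∀ i : ℕ, i ≤ (n - 1) / 2 →
        ((fpoly (n + 1)).comp (Polynomial.X - 1)).coeff ((n - 1) / 2 - i) = h (n + 1) i := by
      intro i hi
      have := hc (n + 1) (by omega) i (by omega)
      rw [← this]
      congr 1
      omega
    have hz1 : ∀ j : ℕ, (n - 1) / 2 < j →
        ((fpoly (n + 1)).comp (Polynomial.X - 1)).coeff j = 0 := by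
      intro j hj
      exact hz (n + 1) (by omega) j (by omega)
    refine ⟨?_, ?_, ?_⟩
    · -- h (n+1) 0 = h n 0, via step at (n-1)/2 + 1
      have hs := step ((n - 1) / 2 + 1)
      simp only [if_neg (show ¬((n - 1) / 2 + 1 = 0) by omega), Nat.add_sub_cancel] at hs
      have e1 := hc1 0 (by omega)
      rw [Nat.sub_zero] at e1
      have e2 := hz1 ((n - 1) / 2 + 1) (by omega)
      have e3 := hc n hn 0 (by omega)
      rw [Nat.sub_zero] at e3
      rw [e1, e2, e3] at hs
      linarith
    · -- middle recurrence, via step at (n-1)/2 - (i-1)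
      intro i hi1 hi2
      have hn2 : n / 2 = (n - 1) / 2 := by omega
      rw [hn2] at hi2
      have hs := step ((n - 1) / 2 - (i - 1))
      simp only [if_neg (show ¬((n - 1) / 2 - (i - 1) = 0) by omega)] at hs
      have e0 : (n - 1) / 2 - (i - 1) - 1 = (n - 1) / 2 - i := by omega
      rw [e0] at hs
      rw [hc1 i (by omega), hc1 (i - 1) (by omega), hc n hn i (by omega)] at hs
      rw [if_pos hod]
      linarith
    · -- top coefficient
      have hs := step 0
      norm_num at hs
      have e1 := hc1 ((n - 1) / 2) le_rfl
      rw [Nat.sub_self] at e1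
      rw [e1] at hs
      have htop : h (n + 1) ((n - 1) / 2) = c := by linarith
      have hn2 : n / 2 = (n - 1) / 2 := by omega
      rw [hn2, if_pos hod, one_mul, htop, hcdef]
      have hv := pcount_top (D := (n - 1) / 2) (by omega)
      have e : 2 * ((n - 1) / 2) + 1 = n := by omega
      rw [e] at hv
      exact hv
end

section
/- Let n ≥ 3, let K be a field, and consider the polynomial ring K[x_S : S ∈ P_n] with one variable for each element of P_n. Let I be the ideal generated by all products x_S · x_T where S, T ∈ P_n are incomparable under inclusion (neither S ⊆ T nor T ⊆ S), and let A = K[x_S : S ∈ P_n]/I, a graded algebra. Then for every integer k ≥ 1, the K-dimension of the degree-k homogeneous component of A equals Σ_{j=0}^{⌊(n−1)/2⌋} p_{n,j−1} · k^j; that is, the Hilbert polynomial of A is x^{⌊(n−1)/2⌋} · P_n(1/x) where P_n is the f-polynomial of P_n. -/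
open Finset Polynomial

namespace PeakAux


/-- `enum A i` is the `i`-th smallest element of `A` (0-indexed). -/
noncomputable def enum (A : Finset ℕ) (i : ℕ) : ℕ := (A.sort (· ≤ ·)).getD i 0

lemma enum_mem {A : Finset ℕ} {i : ℕ} (h : i < A.card) : enum A i ∈ A := by
  rw [enum, List.getD_eq_getElem _ _ (by rwa [Finset.length_sort])]
  exact (Finset.mem_sort _).1 (List.getElem_mem _)

lemma enum_lt_enum {A : Finset ℕ} {i j : ℕ} (hij : i < j) (hj : j < A.card) :
    enum A i < enum A j := by
  rw [enum, enum, List.getD_eq_getElem _ _ (by rw [Finset.length_sort]; omega),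
    List.getD_eq_getElem _ _ (by rwa [Finset.length_sort])]
  exact List.pairwise_iff_getElem.1 (A.sortedLT_sort.pairwise) _ _ _ _ hij

lemma enum_strictMonoOn {A : Finset ℕ} {i j : ℕ} (hne : i ≠ j) (hi : i < A.card)
    (hj : j < A.card) : enum A i ≠ enum A j := by
  rcases hne.lt_or_gt with h | h
  · exact (enum_lt_enum h hj).ne
  · exact (enum_lt_enum h hi).ne'

lemma enum_surj {A : Finset ℕ} {a : ℕ} (ha : a ∈ A) : ∃ i < A.card, enum A i = a := by
  have : a ∈ A.sort (· ≤ ·) := (Finset.mem_sort _).2 ha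
  obtain ⟨i, hi, he⟩ := List.getElem_of_mem this
  exact ⟨i, by rwa [Finset.length_sort] at hi, by
    rw [enum, List.getD_eq_getElem _ _ hi]; exact he⟩

lemma eq_image_enum (A : Finset ℕ) : A = (Finset.range A.card).image (enum A) := by
  apply Finset.Subset.antisymm
  · intro a ha
    obtain ⟨i, hi, he⟩ := enum_surj ha
    exact Finset.mem_image.2 ⟨i, Finset.mem_range.2 hi, he⟩
  · intro a ha
    obtain ⟨i, hi, he⟩ := Finset.mem_image.1 ha
    exact he ▸ enum_mem (Finset.mem_range.1 hi)

lemma filter_le_enum (A : Finset ℕ) {i : ℕ} (hi : i < A.card) :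
    (A.filter (· ≤ enum A i)).card = i + 1 := by
  have : A.filter (· ≤ enum A i) = (Finset.range (i+1)).image (enum A) := by
    apply Finset.Subset.antisymm
    · intro a ha
      rw [Finset.mem_filter] at ha
      obtain ⟨t, ht, he⟩ := enum_surj ha.1
      refine Finset.mem_image.2 ⟨t, Finset.mem_range.2 ?_, he⟩
      by_contra h
      exact absurd (he ▸ ha.2) (not_le.2 (enum_lt_enum (by omega) ht))
    · intro a ha
      obtain ⟨t, ht, he⟩ := Finset.mem_image.1 ha
      rw [Finset.mem_range] at ht
      subst he
      refine Finset.mem_filter.2 ⟨enum_mem (by omega), ?_⟩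
      rcases eq_or_lt_of_le (Nat.lt_succ_iff.1 ht) with h | h
      · rw [h]
      · exact (enum_lt_enum h hi).le
  rw [this, Finset.card_image_of_injOn, Finset.card_range]
  intro x hx y hy hxy
  by_contra hne
  exact enum_strictMonoOn hne (by simp at hx; omega) (by simp at hy; omega) hxy

lemma filter_lt_enum (A : Finset ℕ) {i : ℕ} (hi : i < A.card) :
    (A.filter (· < enum A i)).card = i := by
  have h1 : A.filter (· ≤ enum A i) = insert (enum A i) (A.filter (· < enum A i)) := by
    ext a
    simp only [Finset.mem_filter, Finset.mem_insert]
    constructor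
    · rintro ⟨ha, hle⟩
      rcases eq_or_lt_of_le hle with h | h
      · exact Or.inl h
      · exact Or.inr ⟨ha, h⟩
    · rintro (rfl | ⟨ha, hlt⟩)
      · exact ⟨enum_mem hi, le_refl _⟩
      · exact ⟨ha, hlt.le⟩
  have h2 : enum A i ∉ A.filter (· < enum A i) := by simp
  have := filter_le_enum A hi
  rw [h1, Finset.card_insert_of_notMem h2] at this
  omega

lemma enum_lt_of_card_le {A : Finset ℕ} {i x : ℕ} (hi : i < A.card)
    (h : i + 1 ≤ (A.filter (· < x)).card) : enum A i < x := by
  by_contra hc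
  push_neg at hc
  have hsub : A.filter (· < x) ⊆ (Finset.range i).image (enum A) := by
    intro a ha
    rw [Finset.mem_filter] at ha
    obtain ⟨t, ht, he⟩ := enum_surj ha.1
    refine Finset.mem_image.2 ⟨t, Finset.mem_range.2 ?_, he⟩
    by_contra hti
    push_neg at hti
    have : enum A i ≤ a := by
      rcases eq_or_lt_of_le hti with h' | h'
      · rw [← he, ← h']
      · rw [← he]; exact (enum_lt_enum h' ht).le
    omega
  have := Finset.card_le_card hsub
  have := Finset.card_image_le (s := Finset.range i) (f := enum A)
  simp only [Finset.card_range] at this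
  omega

lemma peak_card_bound (n : ℕ) (σ : ℕ → ℕ) (S : Finset ℕ) (F : Finset ℕ) (v : ℕ)
    (hF : F ⊆ Finset.Icc 2 (n-1)) (hn : 3 ≤ n)
    (hσ : Set.BijOn σ (Set.Icc 1 n) (Set.Icc 1 n))
    (hpeak : ∀ p ∈ F, σ (p-1) < σ p ∧ σ (p+1) < σ p)
    (hS : S = F.image σ) (hv : v ∈ S) :
    2 * (S.filter (· ≤ v)).card < v := by
  classical
  have hFn : ∀ p ∈ F, 2 ≤ p ∧ p ≤ n - 1 := fun p hp => by
    have := hF hp; rw [Finset.mem_Icc] at this; exact this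
  have hFIcc : ∀ p ∈ F, p ∈ Set.Icc 1 n := fun p hp => by
    have := hFn p hp; constructor <;> omega
  have hinj := hσ.injOn
  set Q := F.filter (fun p => σ p ≤ v) with hQ
  have hQF : Q ⊆ F := Finset.filter_subset _ _
  have hUQ : S.filter (· ≤ v) = Q.image σ := by
    subst hS
    ext x
    simp only [Finset.mem_filter, Finset.mem_image, hQ]
    constructor
    · rintro ⟨⟨p, hp, rfl⟩, hle⟩
      exact ⟨p, ⟨hp, hle⟩, rfl⟩
    · rintro ⟨p, ⟨hp1, hp2⟩, rfl⟩
      exact ⟨⟨p, hp1, rfl⟩, hp2⟩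
  have hQcard : (Q.image σ).card = Q.card :=
    Finset.card_image_of_injOn (fun x hx y hy => hinj (hFIcc x (hQF hx)) (hFIcc y (hQF hy)))
  have hQne : Q.Nonempty := by
    rw [hS] at hv
    obtain ⟨p, hp, hpv⟩ := Finset.mem_image.1 hv
    exact ⟨p, Finset.mem_filter.2 ⟨hp, hpv.le⟩⟩
  -- nonadjacency
  have hadj : ∀ p ∈ Q, ∀ q ∈ Q, q ≠ p + 1 := by
    intro p hp q hq hpq
    have h1 := (hpeak p (hQF hp)).2
    have h2 := (hpeak q (hQF hq)).1
    have : q - 1 = p := by omega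
    rw [this, hpq] at h2
    omega
  set m := Q.min' hQne with hm
  have hmQ : m ∈ Q := Q.min'_mem hQne
  have hm2 : 2 ≤ m := (hFn m (hQF hmQ)).1
  have hmn : m ≤ n - 1 := (hFn m (hQF hmQ)).2
  set N := (Q ∪ Q.image (· + 1)) ∪ {m - 1} with hN
  have hd1 : Disjoint Q (Q.image (· + 1)) := by
    rw [Finset.disjoint_left]
    intro x hx hx'
    obtain ⟨q, hq, rfl⟩ := Finset.mem_image.1 hx'
    exact hadj q hq _ hx rfl
  have hd2 : Disjoint (Q ∪ Q.image (· + 1)) {m - 1} := by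
    rw [Finset.disjoint_right]
    intro x hx hx'
    rw [Finset.mem_singleton] at hx
    subst hx
    rcases Finset.mem_union.1 hx' with h | h
    · have := Q.min'_le _ h
      omega
    · obtain ⟨q, hq, hq'⟩ := Finset.mem_image.1 h
      have := Q.min'_le _ hq
      omega
  have hNcard : N.card = 2 * Q.card + 1 := by
    rw [hN, Finset.card_union_of_disjoint hd2, Finset.card_union_of_disjoint hd1,
      Finset.card_image_of_injective _ (add_left_injective 1), Finset.card_singleton]
    ring
  have hNIcc : ∀ x ∈ N, x ∈ Set.Icc 1 n := by
    intro x hx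
    rcases Finset.mem_union.1 hx with h | h
    · rcases Finset.mem_union.1 h with h | h
      · exact hFIcc x (hQF h)
      · obtain ⟨q, hq, rfl⟩ := Finset.mem_image.1 h
        have := hFn q (hQF hq)
        constructor <;> omega
    · rw [Finset.mem_singleton] at h
      subst h
      constructor <;> omega
  have hNv : ∀ x ∈ N, σ x ∈ Finset.Icc 1 v := by
    intro x hx
    have h1 : 1 ≤ σ x := (hσ.mapsTo (hNIcc x hx)).1
    rcases Finset.mem_union.1 hx with h | h
    · rcases Finset.mem_union.1 h with h | h
      · rw [hQ, Finset.mem_filter] at h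
        exact Finset.mem_Icc.2 ⟨h1, h.2⟩
      · obtain ⟨q, hq, rfl⟩ := Finset.mem_image.1 h
        have h2 := (hpeak q (hQF hq)).2
        have h3 : σ q ≤ v := (Finset.mem_filter.1 hq).2
        exact Finset.mem_Icc.2 ⟨h1, by omega⟩
    · rw [Finset.mem_singleton] at h
      subst h
      have h2 := (hpeak m (hQF hmQ)).1
      have h3 : σ m ≤ v := (Finset.mem_filter.1 hmQ).2
      exact Finset.mem_Icc.2 ⟨h1, by omega⟩
  have hNimg : (N.image σ).card = N.card :=
    Finset.card_image_of_injOn (fun x hx y hy => hinj (hNIcc x hx) (hNIcc y hy))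
  have hsub : N.image σ ⊆ Finset.Icc 1 v := by
    intro y hy
    obtain ⟨x, hx, rfl⟩ := Finset.mem_image.1 hy
    exact hNv x hx
  have := Finset.card_le_card hsub
  rw [hNimg, hNcard, Nat.card_Icc] at this
  rw [hUQ, hQcard]
  omega
theorem sufficiency (n : ℕ) (hn : 3 ≤ n) (S : Finset ℕ) (hSn : S ⊆ Finset.Icc 1 n)
    (hval : ∀ v ∈ S, 2 * (S.filter (· ≤ v)).card < v) :
    ∃ σ : ℕ → ℕ, Set.BijOn σ (Set.Icc 1 n) (Set.Icc 1 n) ∧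
      ((Finset.Icc 2 (n - 1)).filter
        (fun i => σ (i - 1) < σ i ∧ σ (i + 1) < σ i)).image σ = S := by
  classical
  set j := S.card with hj
  set C := Finset.Icc 1 n \ S with hC
  have hSmem : ∀ v ∈ S, 1 ≤ v ∧ v ≤ n := fun v hv => Finset.mem_Icc.1 (hSn hv)
  have hCcard : C.card = n - j := by
    rw [hC, Finset.card_sdiff_of_subset hSn, Nat.card_Icc]
    omega
  -- s_i ≥ 2i+3 (0-indexed)
  have hkey : ∀ i < j, 2 * i + 3 ≤ enum S i := by
    intro i hi
    have h1 := hval (enum S i) (enum_mem hi)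
    rw [filter_le_enum S hi] at h1
    omega
  have h2j : 2 * j < n := by
    rcases Nat.eq_zero_or_pos j with h | h
    · omega
    · have h1 := hkey (j - 1) (by omega)
      have h2 := (hSmem _ (enum_mem (show j - 1 < j by omega))).2
      omega
  have hjm : j < C.card := by rw [hCcard]; omega
  -- number of complement elements below s_i
  have hCfilt : ∀ i < j, i + 2 ≤ (C.filter (· < enum S i)).card := by
    intro i hi
    have hsi := hkey i hi
    have hsin := (hSmem _ (enum_mem hi)).2
    have hIf : (Finset.Icc 1 n).filter (· < enum S i) = Finset.Icc 1 (enum S i - 1) := by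
      ext x
      simp only [Finset.mem_filter, Finset.mem_Icc]
      omega
    have hsplit : C.filter (· < enum S i) =
        ((Finset.Icc 1 n).filter (· < enum S i)) \ (S.filter (· < enum S i)) := by
      rw [hC]
      ext x
      simp only [Finset.mem_filter, Finset.mem_sdiff]
      tauto
    have hsub : S.filter (· < enum S i) ⊆ (Finset.Icc 1 n).filter (· < enum S i) :=
      Finset.filter_subset_filter _ hSn
    rw [hsplit, Finset.card_sdiff_of_subset hsub, hIf, filter_lt_enum S hi, Nat.card_Icc]
    omega
  have hClt : ∀ i < j, ∀ l ≤ i + 1, enum C l < enum S i := by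
    intro i hi l hl
    refine enum_lt_of_card_le (by omega) ?_
    have := hCfilt i hi
    omega
  -- the permutation
  set σ : ℕ → ℕ := fun p =>
    if p ≤ 2 * j ∧ p % 2 = 0 then enum S (p / 2 - 1)
    else enum C (if p ≤ 2 * j then p / 2 else p - 1 - j) with hσ
  have hσE : ∀ i, 1 ≤ i → i ≤ j → σ (2 * i) = enum S (i - 1) := by
    intro i h1 h2
    rw [hσ]
    simp only
    rw [if_pos ⟨by omega, by omega⟩]
    congr 1
    omega
  have hσO : ∀ p, ¬(p ≤ 2 * j ∧ p % 2 = 0) →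
      σ p = enum C (if p ≤ 2 * j then p / 2 else p - 1 - j) := by
    intro p hp
    rw [hσ]
    simp only
    rw [if_neg hp]
  have hσodd : ∀ i ≤ j, σ (2 * i + 1) = enum C i := by
    intro i hi
    rw [hσO (2 * i + 1) (by omega)]
    rcases Nat.lt_or_ge (2 * i + 1) (2 * j + 1) with h | h
    · rw [if_pos (by omega)]
      congr 1
      omega
    · rw [if_neg (by omega)]
      congr 1
      omega
  have hσtail : ∀ p, 2 * j + 1 ≤ p → σ p = enum C (p - 1 - j) := by
    intro p hp
    rw [hσO p (by omega), if_neg (by omega)]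
  have hidxlt : ∀ p, 1 ≤ p → p ≤ n → ¬(p ≤ 2 * j ∧ p % 2 = 0) →
      (if p ≤ 2 * j then p / 2 else p - 1 - j) < C.card := by
    intro p h1 h2 h3
    rw [hCcard]
    split <;> omega
  -- maps to
  have hCsub : C ⊆ Finset.Icc 1 n := Finset.sdiff_subset
  have hmapsto : ∀ p, 1 ≤ p → p ≤ n → 1 ≤ σ p ∧ σ p ≤ n := by
    intro p h1 h2
    by_cases hp : p ≤ 2 * j ∧ p % 2 = 0
    · have : σ p = enum S (p / 2 - 1) := by
        have := hσE (p / 2) (by omega) (by omega)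
        rw [show 2 * (p / 2) = p by omega] at this
        exact this
      rw [this]
      exact hSmem _ (enum_mem (by omega))
    · rw [hσO p hp]
      exact Finset.mem_Icc.1 (hCsub (enum_mem (hidxlt p h1 h2 hp)))
  -- injectivity
  have hinj : ∀ p q, 1 ≤ p → p ≤ n → 1 ≤ q → q ≤ n → σ p = σ q → p = q := by
    intro p q hp1 hp2 hq1 hq2 heq
    by_cases hp : p ≤ 2 * j ∧ p % 2 = 0 <;> by_cases hq : q ≤ 2 * j ∧ q % 2 = 0
    · have e1 := hσE (p / 2) (by omega) (by omega)
      have e2 := hσE (q / 2) (by omega) (by omega)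
      rw [show 2 * (p / 2) = p by omega] at e1
      rw [show 2 * (q / 2) = q by omega] at e2
      rw [e1, e2] at heq
      by_contra hne
      exact enum_strictMonoOn (i := p / 2 - 1) (j := q / 2 - 1) (by omega)
        (by omega) (by omega) heq
    · have e1 := hσE (p / 2) (by omega) (by omega)
      rw [show 2 * (p / 2) = p by omega] at e1
      rw [e1, hσO q hq] at heq
      have h1 : enum S (p / 2 - 1) ∈ S := enum_mem (by omega)
      have h2 : enum C _ ∈ C := enum_mem (hidxlt q hq1 hq2 hq)
      rw [← heq] at h2
      rw [hC, Finset.mem_sdiff] at h2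
      exact absurd h1 h2.2
    · have e2 := hσE (q / 2) (by omega) (by omega)
      rw [show 2 * (q / 2) = q by omega] at e2
      rw [e2, hσO p hp] at heq
      have h1 : enum S (q / 2 - 1) ∈ S := enum_mem (by omega)
      have h2 : enum C _ ∈ C := enum_mem (hidxlt p hp1 hp2 hp)
      rw [heq] at h2
      rw [hC, Finset.mem_sdiff] at h2
      exact absurd h1 h2.2
    · rw [hσO p hp, hσO q hq] at heq
      have hip := hidxlt p hp1 hp2 hp
      have hiq := hidxlt q hq1 hq2 hq
      have : (if p ≤ 2 * j then p / 2 else p - 1 - j) =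
          (if q ≤ 2 * j then q / 2 else q - 1 - j) := by
        by_contra hne
        exact enum_strictMonoOn hne hip hiq heq
      revert this
      split <;> split <;> intro h <;> omega
  -- bijection
  have hbij : Set.BijOn σ (Set.Icc 1 n) (Set.Icc 1 n) := by
    have hmt : Set.MapsTo σ (Set.Icc 1 n) (Set.Icc 1 n) := by
      intro x hx
      rw [Set.mem_Icc] at hx ⊢
      exact hmapsto x hx.1 hx.2
    have hio : Set.InjOn σ (Set.Icc 1 n) := by
      intro x hx y hy hxy
      rw [Set.mem_Icc] at hx hy
      exact hinj x y hx.1 hx.2 hy.1 hy.2 hxy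
    refine ⟨hmt, hio, ?_⟩
    have himg : (Finset.Icc 1 n).image σ = Finset.Icc 1 n := by
      apply Finset.eq_of_subset_of_card_le
      · intro x hx
        obtain ⟨p, hp, rfl⟩ := Finset.mem_image.1 hx
        rw [Finset.mem_Icc] at hp ⊢
        exact hmapsto p hp.1 hp.2
      · rw [Finset.card_image_of_injOn]
        intro x hx y hy hxy
        rw [Finset.coe_Icc, Set.mem_Icc] at hx hy
        exact hinj x y hx.1 hx.2 hy.1 hy.2 hxy
    have : (Set.Icc 1 n : Set ℕ) = σ '' Set.Icc 1 n := by
      rw [← Finset.coe_Icc, ← Finset.coe_image, himg]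
    exact this.subset
  -- peak positions
  have hFeq : (Finset.Icc 2 (n - 1)).filter (fun i => σ (i - 1) < σ i ∧ σ (i + 1) < σ i)
      = (Finset.Icc 1 j).image (2 * ·) := by
    ext p
    simp only [Finset.mem_filter, Finset.mem_image, Finset.mem_Icc]
    constructor
    · rintro ⟨⟨hp2, hpn⟩, hpk1, hpk2⟩
      by_cases hp : p ≤ 2 * j ∧ p % 2 = 0
      · exact ⟨p / 2, ⟨by omega, by omega⟩, by omega⟩
      · exfalso
        rcases Nat.lt_or_ge p (2 * j + 1) with h | h
        · -- p odd, p ≤ 2j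
          have hodd : p % 2 = 1 := by omega
          have ht : p / 2 < j := by omega
          have e1 : σ p = enum C (p / 2) := by
            have := hσodd (p / 2) (by omega)
            rw [show 2 * (p / 2) + 1 = p by omega] at this
            exact this
          have e2 : σ (p + 1) = enum S (p / 2) := by
            have := hσE (p / 2 + 1) (by omega) (by omega)
            rw [show 2 * (p / 2 + 1) = p + 1 by omega, Nat.add_sub_cancel] at this
            exact this
          rw [e1, e2] at hpk2
          exact absurd hpk2 (not_lt.2 (hClt (p / 2) ht (p / 2) (by omega)).le)
        · -- tail
          have e1 := hσtail p h
          have e2 := hσtail (p + 1) (by omega)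
          rw [e1, e2] at hpk2
          have : enum C (p - 1 - j) < enum C (p + 1 - 1 - j) :=
            enum_lt_enum (by omega) (by rw [hCcard]; omega)
          omega
    · rintro ⟨i, ⟨hi1, hi2⟩, rfl⟩
      have e0 : σ (2 * i) = enum S (i - 1) := hσE i hi1 hi2
      have e1 : σ (2 * i - 1) = enum C (i - 1) := by
        have := hσodd (i - 1) (by omega)
        rw [show 2 * (i - 1) + 1 = 2 * i - 1 by omega] at this
        exact this
      have e2 : σ (2 * i + 1) = enum C i := hσodd i hi2
      refine ⟨⟨by omega, by omega⟩, ?_, ?_⟩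
      · rw [e0, e1]
        exact hClt (i - 1) (by omega) (i - 1) (by omega)
      · rw [e0, e2]
        exact hClt (i - 1) (by omega) i (by omega)
  refine ⟨σ, hbij, ?_⟩
  rw [hFeq, Finset.image_image]
  have : ∀ i ∈ Finset.Icc 1 j, (σ ∘ (2 * ·)) i = enum S (i - 1) := by
    intro i hi
    rw [Finset.mem_Icc] at hi
    exact hσE i hi.1 hi.2
  rw [Finset.image_congr (fun i hi => this i hi)]
  -- (Icc 1 j).image (fun i => enum S (i-1)) = S
  conv_rhs => rw [eq_image_enum S]
  ext a
  simp only [Finset.mem_image, Finset.mem_Icc, Finset.mem_range]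
  constructor
  · rintro ⟨i, ⟨h1, h2⟩, rfl⟩
    exact ⟨i - 1, by omega, rfl⟩
  · rintro ⟨t, ht, rfl⟩
    exact ⟨t + 1, ⟨by omega, by omega⟩, by simp⟩

lemma Pn_necess {n : ℕ} (hn : 3 ≤ n) {S : Finset ℕ} (hS : S ∈ Pn n) :
    S ⊆ Finset.Icc 1 n ∧ ∀ v ∈ S, 2 * (S.filter (· ≤ v)).card < v := by
  classical
  have hS' : S ∈ (Finset.Icc 1 n).powerset ∧
      ∃ σ : ℕ → ℕ, IsPermOn n σ ∧ CP n σ = S := by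
    rw [Pn] at hS
    simpa using (Finset.mem_filter.1 hS)
  obtain ⟨hpow, σ, hperm, hCP⟩ := hS'
  refine ⟨Finset.mem_powerset.1 hpow, ?_⟩
  intro v hv
  exact peak_card_bound n σ S _ v (Finset.filter_subset _ _) hn hperm
    (fun p hp => (Finset.mem_filter.1 hp).2) (by rw [← hCP]; rfl) hv

lemma Pn_suffic {n : ℕ} (hn : 3 ≤ n) {S : Finset ℕ} (hSn : S ⊆ Finset.Icc 1 n)
    (hval : ∀ v ∈ S, 2 * (S.filter (· ≤ v)).card < v) : S ∈ Pn n := by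
  classical
  obtain ⟨σ, hbij, hCP⟩ := sufficiency n hn S hSn hval
  rw [Pn]
  simp only [Finset.mem_filter, Finset.mem_powerset]
  exact ⟨hSn, σ, hbij, hCP⟩

lemma Pn_downward {n : ℕ} (hn : 3 ≤ n) {S T : Finset ℕ} (hS : S ∈ Pn n) (hT : T ⊆ S) :
    T ∈ Pn n := by
  obtain ⟨hsub, hval⟩ := Pn_necess hn hS
  apply Pn_suffic hn (hT.trans hsub)
  intro v hv
  have h1 : (T.filter (· ≤ v)).card ≤ (S.filter (· ≤ v)).card :=
    Finset.card_le_card (Finset.filter_subset_filter _ hT)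
  have h2 := hval v (hT hv)
  omega

lemma Pn_card_le {n : ℕ} (hn : 3 ≤ n) {S : Finset ℕ} (hS : S ∈ Pn n) :
    S.card ≤ (n - 1) / 2 := by
  rcases S.eq_empty_or_nonempty with rfl | hne
  · simp
  · obtain ⟨hsub, hval⟩ := Pn_necess hn hS
    have hv := hval (S.max' hne) (S.max'_mem hne)
    have hfull : S.filter (· ≤ S.max' hne) = S :=
      Finset.filter_true_of_mem (fun a ha => S.le_max' a ha)
    rw [hfull] at hv
    have hmn : S.max' hne ≤ n := (Finset.mem_Icc.1 (hsub (S.max'_mem hne))).2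
    omega
section Counting
attribute [local irreducible] Pn
variable (n k : ℕ)

open scoped Classical

/-- chains with multiplicity: exponent vectors of degree `k` with chain support -/
noncomputable def Bk : Finset ({S : Finset ℕ // S ∈ Pn n} →₀ ℕ) :=
  ((Finset.univ : Finset {S : Finset ℕ // S ∈ Pn n}).finsuppAntidiag k).filter
    (fun d => ∀ a ∈ d.support, ∀ b ∈ d.support, a.1 ⊆ b.1 ∨ b.1 ⊆ a.1)

variable {n k}

local notation "V" => {S : Finset ℕ // S ∈ Pn n}

lemma chain_max (F : Finset V) (hch : ∀ a ∈ F, ∀ b ∈ F, a.1 ⊆ b.1 ∨ b.1 ⊆ a.1)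
    (hne : F.Nonempty) : ∃ m ∈ F, ∀ b ∈ F, b.1 ⊆ m.1 := by
  classical
  revert hch hne
  induction F using Finset.induction_on with
  | empty => exact fun _ hne => absurd hne (by simp)
  | @insert a F' hxa ih =>
    intro hch hne
    rcases F'.eq_empty_or_nonempty with rfl | hne'
    · exact ⟨a, Finset.mem_insert_self _ _, by simp⟩
    · obtain ⟨m, hm, hmax⟩ := ih (fun x hx y hy => hch x (Finset.mem_insert_of_mem hx) y
        (Finset.mem_insert_of_mem hy)) hne'
      rcases hch a (Finset.mem_insert_self _ _) m (Finset.mem_insert_of_mem hm) with h | h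
      · refine ⟨m, Finset.mem_insert_of_mem hm, ?_⟩
        intro b hb
        rcases Finset.mem_insert.1 hb with rfl | hb
        · exact h
        · exact hmax b hb
      · refine ⟨a, Finset.mem_insert_self _ _, ?_⟩
        intro b hb
        rcases Finset.mem_insert.1 hb with rfl | hb
        · exact Finset.Subset.refl _
        · exact (hmax b hb).trans h

lemma chain_min (F : Finset V) (hch : ∀ a ∈ F, ∀ b ∈ F, a.1 ⊆ b.1 ∨ b.1 ⊆ a.1)
    (hne : F.Nonempty) : ∃ m ∈ F, ∀ b ∈ F, m.1 ⊆ b.1 := by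
  classical
  revert hch hne
  induction F using Finset.induction_on with
  | empty => exact fun _ hne => absurd hne (by simp)
  | @insert a F' hxa ih =>
    intro hch hne
    rcases F'.eq_empty_or_nonempty with rfl | hne'
    · exact ⟨a, Finset.mem_insert_self _ _, by simp⟩
    · obtain ⟨m, hm, hmin⟩ := ih (fun x hx y hy => hch x (Finset.mem_insert_of_mem hx) y
        (Finset.mem_insert_of_mem hy)) hne'
      rcases hch a (Finset.mem_insert_self _ _) m (Finset.mem_insert_of_mem hm) with h | h
      · refine ⟨a, Finset.mem_insert_self _ _, ?_⟩
        intro b hb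
        rcases Finset.mem_insert.1 hb with rfl | hb
        · exact Finset.Subset.refl _
        · exact h.trans (hmin b hb)
      · refine ⟨m, Finset.mem_insert_of_mem hm, ?_⟩
        intro b hb
        rcases Finset.mem_insert.1 hb with rfl | hb
        · exact h
        · exact hmin b hb

/-- entry time of a value -/
noncomputable def gfun (d : V →₀ ℕ) (a : ℕ) : ℕ :=
  ∑ b : V, if a ∈ b.1 then 0 else d b

/-- sum of multiplicities strictly below `b₀` in the chain -/
noncomputable def pre (d : V →₀ ℕ) (b₀ : V) : ℕ :=
  ∑ b : V, if b.1 ⊆ b₀.1 ∧ b ≠ b₀ then d b else 0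

/-- sum of multiplicities weakly below `b₀` -/
noncomputable def pre' (d : V →₀ ℕ) (b₀ : V) : ℕ :=
  ∑ b : V, if b.1 ⊆ b₀.1 then d b else 0

/-- the top set -/
noncomputable def topd (d : V →₀ ℕ) : Finset ℕ := d.support.sup (fun b => b.1)

lemma pre'_eq (d : V →₀ ℕ) (b₀ : V) : pre' d b₀ = pre d b₀ + d b₀ := by
  classical
  have hb₀ : d b₀ = ∑ b : V, if b = b₀ then d b else 0 := by
    rw [Finset.sum_ite_eq' Finset.univ b₀ (fun b => d b), if_pos (Finset.mem_univ b₀)]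
  rw [pre', pre, hb₀, ← Finset.sum_add_distrib]
  apply Finset.sum_congr rfl
  intro b _
  by_cases hb : b = b₀
  · subst hb
    simp
  · simp [hb]

lemma mem_Bk_iff (d : V →₀ ℕ) : d ∈ Bk n k ↔ (∑ b : V, d b) = k ∧
    ∀ a ∈ d.support, ∀ b ∈ d.support, a.1 ⊆ b.1 ∨ b.1 ⊆ a.1 := by
  rw [Bk, Finset.mem_filter, Finset.mem_finsuppAntidiag]
  simp only [Finset.subset_univ, and_true]

lemma pre'_le (d : V →₀ ℕ) (hd : d ∈ Bk n k) (b₀ : V) : pre' d b₀ ≤ k := by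
  rw [← ((mem_Bk_iff d).1 hd).1, pre']
  apply Finset.sum_le_sum
  intro b _
  split <;> simp

lemma topd_spec (d : V →₀ ℕ) (hd : d ∈ Bk n k) (hne : d.support.Nonempty) :
    ∃ m ∈ d.support, topd d = m.1 := by
  obtain ⟨m, hm, hmax⟩ := chain_max d.support ((mem_Bk_iff d).1 hd).2 hne
  refine ⟨m, hm, le_antisymm (Finset.sup_le hmax) (Finset.le_sup hm)⟩

lemma support_nonempty (d : V →₀ ℕ) (hd : d ∈ Bk n k) (hk : 1 ≤ k) : d.support.Nonempty := by
  rcases Finset.eq_empty_or_nonempty d.support with h | h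
  · exfalso
    have h0 : d = 0 := Finsupp.support_eq_empty.1 h
    have h1 := ((mem_Bk_iff d).1 hd).1
    rw [h0] at h1
    simp at h1
    omega
  · exact h

lemma gfun_lt (d : V →₀ ℕ) (hd : d ∈ Bk n k) (hk : 1 ≤ k) {a : ℕ} (ha : a ∈ topd d) :
    gfun d a < k := by
  obtain ⟨m, hm, hmeq⟩ := topd_spec d hd (support_nonempty d hd hk)
  rw [← ((mem_Bk_iff d).1 hd).1, gfun]
  apply Finset.sum_lt_sum
  · intro b _
    split <;> simp
  · refine ⟨m, Finset.mem_univ m, ?_⟩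
    rw [if_pos (hmeq ▸ ha)]
    exact Nat.pos_of_ne_zero (Finsupp.mem_support_iff.1 hm)

-- E2: interval existence
lemma interval_exists (d : V →₀ ℕ) (hd : d ∈ Bk n k) (hk : 1 ≤ k) {i : ℕ} (hi : i < k) :
    ∃ b ∈ d.support, pre d b ≤ i ∧ i < pre' d b := by
  have hch := ((mem_Bk_iff d).1 hd).2
  have hsum := ((mem_Bk_iff d).1 hd).1
  set W := d.support.filter (fun b => pre d b ≤ i) with hW
  have hWne : W.Nonempty := by
    obtain ⟨m₀, hm₀, hmin⟩ := chain_min d.support hch (support_nonempty d hd hk)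
    refine ⟨m₀, Finset.mem_filter.2 ⟨hm₀, ?_⟩⟩
    have : pre d m₀ = 0 := by
      rw [pre]
      apply Finset.sum_eq_zero
      intro b _
      split
      · rename_i hcond
        by_contra hne
        have hb : b ∈ d.support := Finsupp.mem_support_iff.2 hne
        have := hmin b hb
        exact hcond.2 (Subtype.ext (le_antisymm hcond.1 this))
      · rfl
    omega
  have hWch : ∀ a ∈ W, ∀ b ∈ W, a.1 ⊆ b.1 ∨ b.1 ⊆ a.1 := fun a ha b hb =>
    hch a (Finset.mem_filter.1 ha).1 b (Finset.mem_filter.1 hb).1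
  obtain ⟨bs, hbs, hbsmax⟩ := chain_max W hWch hWne
  have hbs_supp : bs ∈ d.support := (Finset.mem_filter.1 hbs).1
  have hbs_pre : pre d bs ≤ i := (Finset.mem_filter.1 hbs).2
  refine ⟨bs, hbs_supp, hbs_pre, ?_⟩
  by_contra hcon
  push_neg at hcon
  -- pre' d bs ≤ i < k = total, so there is stuff above bs
  set X := d.support.filter (fun b => ¬ b.1 ⊆ bs.1) with hX
  have hXne : X.Nonempty := by
    by_contra hXe
    rw [Finset.not_nonempty_iff_eq_empty] at hXe
    have : ∀ b : V, d b = if b.1 ⊆ bs.1 then d b else 0 := by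
      intro b
      split
      · rfl
      · rename_i hnb
        by_contra hne
        have hb : b ∈ d.support := Finsupp.mem_support_iff.2 hne
        have : b ∈ X := Finset.mem_filter.2 ⟨hb, hnb⟩
        rw [hXe] at this
        exact absurd this (Finset.notMem_empty b)
    have : k = pre' d bs := by
      rw [← hsum, pre']
      exact Finset.sum_congr rfl (fun b _ => this b)
    omega
  have hXch : ∀ a ∈ X, ∀ b ∈ X, a.1 ⊆ b.1 ∨ b.1 ⊆ a.1 := fun a ha b hb =>
    hch a (Finset.mem_filter.1 ha).1 b (Finset.mem_filter.1 hb).1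
  obtain ⟨b₀, hb₀, hb₀min⟩ := chain_min X hXch hXne
  have hb₀supp : b₀ ∈ d.support := (Finset.mem_filter.1 hb₀).1
  have hb₀X : ¬ b₀.1 ⊆ bs.1 := (Finset.mem_filter.1 hb₀).2
  have hpre_b₀ : pre d b₀ ≤ pre' d bs := by
    rw [pre, pre']
    apply Finset.sum_le_sum
    intro b _
    by_cases h1 : b.1 ⊆ b₀.1 ∧ b ≠ b₀
    · rw [if_pos h1]
      by_cases hdb : d b = 0
      · rw [hdb]
        split <;> simp
      · have hb : b ∈ d.support := Finsupp.mem_support_iff.2 hdb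
        have hbbs : b.1 ⊆ bs.1 := by
          by_contra hnb
          have : b ∈ X := Finset.mem_filter.2 ⟨hb, hnb⟩
          have := hb₀min b this
          exact h1.2 (Subtype.ext (le_antisymm h1.1 this))
        rw [if_pos hbbs]
    · rw [if_neg h1]
      exact Nat.zero_le _
  have : b₀ ∈ W := Finset.mem_filter.2 ⟨hb₀supp, by omega⟩
  exact hb₀X (hbsmax b₀ this)


lemma topd_mem (d : V →₀ ℕ) (hd : d ∈ Bk n k) (hk : 1 ≤ k) : topd d ∈ Pn n := by
  obtain ⟨m, _, hmeq⟩ := topd_spec d hd (support_nonempty d hd hk)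
  rw [hmeq]
  exact m.2

variable (hn : 3 ≤ n)

noncomputable def Cset (S : Finset ℕ) (hS : S ∈ Pn n) (f : ∀ a ∈ S, ℕ) (i : ℕ) : V :=
  ⟨S.filter (fun a => ∃ h : a ∈ S, f a h ≤ i), Pn_downward hn hS (Finset.filter_subset _ _)⟩

lemma Cset_val (S : Finset ℕ) (hS : S ∈ Pn n) (f : ∀ a ∈ S, ℕ) (i : ℕ) {a : ℕ} :
    a ∈ (Cset hn S hS f i).1 ↔ a ∈ S ∧ ∃ h : a ∈ S, f a h ≤ i := by
  rw [Cset, Finset.mem_filter]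

noncomputable def jmap (S : Finset ℕ) (hS : S ∈ Pn n) (f : ∀ a ∈ S, ℕ) (k : ℕ) : V →₀ ℕ :=
  ∑ i ∈ Finset.range k, Finsupp.single (Cset hn S hS f i) 1

lemma jmap_apply (S : Finset ℕ) (hS : S ∈ Pn n) (f : ∀ a ∈ S, ℕ) (b : V) :
    jmap hn S hS f k b = ((Finset.range k).filter (fun i => Cset hn S hS f i = b)).card := by
  rw [jmap, Finsupp.finset_sum_apply, Finset.card_filter]
  exact Finset.sum_congr rfl (fun i _ => Finsupp.single_apply)

lemma Cset_eq_of_interval (d : V →₀ ℕ) (hd : d ∈ Bk n k) (hk : 1 ≤ k) {b : V}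
    (hb : b ∈ d.support) {i : ℕ} (h1 : pre d b ≤ i) (h2 : i < pre' d b) :
    Cset hn (topd d) (topd_mem d hd hk) (fun a _ => gfun d a) i = b := by
  have hch := ((mem_Bk_iff d).1 hd).2
  apply Subtype.ext
  ext a
  rw [Cset_val]
  constructor
  · rintro ⟨ha, _, hga⟩
    by_contra hab
    have : pre' d b ≤ gfun d a := by
      rw [pre', gfun]
      apply Finset.sum_le_sum
      intro b' _
      by_cases hcb : b'.1 ⊆ b.1
      · rw [if_pos hcb, if_neg (fun hac => hab (hcb hac))]
      · rw [if_neg hcb]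
        exact Nat.zero_le _
    omega
  · intro hab
    have haT : a ∈ topd d := Finset.mem_of_subset (Finset.le_sup hb) hab
    refine ⟨haT, haT, ?_⟩
    have : gfun d a ≤ pre d b := by
      rw [pre, gfun]
      apply Finset.sum_le_sum
      intro b' _
      by_cases hmem : a ∈ b'.1
      · rw [if_pos hmem]
        exact Nat.zero_le _
      · rw [if_neg hmem]
        by_cases hdb : d b' = 0
        · rw [hdb]
          split <;> simp
        · have hb' : b' ∈ d.support := Finsupp.mem_support_iff.2 hdb
          rcases hch b hb b' hb' with h | h
          · exact absurd (h hab) hmem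
          · rw [if_pos ⟨h, fun he => hmem (he ▸ hab)⟩]
    omega

lemma left_inv (d : V →₀ ℕ) (hd : d ∈ Bk n k) (hk : 1 ≤ k) :
    jmap hn (topd d) (topd_mem d hd hk) (fun a _ => gfun d a) k = d := by
  ext b
  rw [jmap_apply]
  by_cases hb : b ∈ d.support
  · have hfilt : (Finset.range k).filter
        (fun i => Cset hn (topd d) (topd_mem d hd hk) (fun a _ => gfun d a) i = b) =
        Finset.Ico (pre d b) (pre' d b) := by
      ext i
      rw [Finset.mem_filter, Finset.mem_Ico, Finset.mem_range]
      constructor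
      · rintro ⟨hik, hC⟩
        obtain ⟨b₁, hb₁, h1, h2⟩ := interval_exists d hd hk hik
        have hC1 := Cset_eq_of_interval hn d hd hk hb₁ h1 h2
        rw [hC] at hC1
        subst hC1
        exact ⟨h1, h2⟩
      · rintro ⟨h1, h2⟩
        have hik : i < k := lt_of_lt_of_le h2 (pre'_le d hd b)
        exact ⟨hik, Cset_eq_of_interval hn d hd hk hb h1 h2⟩
    rw [hfilt, Nat.card_Ico, pre'_eq]
    omega
  · rw [Finsupp.notMem_support_iff.1 hb]
    rw [Finset.card_eq_zero, Finset.filter_eq_empty_iff]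
    intro i hik
    rw [Finset.mem_range] at hik
    obtain ⟨b₁, hb₁, h1, h2⟩ := interval_exists d hd hk hik
    rw [Cset_eq_of_interval hn d hd hk hb₁ h1 h2]
    intro he
    exact hb (he ▸ hb₁)

lemma jmap_mem (S : Finset ℕ) (hS : S ∈ Pn n) (f : ∀ a ∈ S, ℕ)
    (hf : ∀ a (ha : a ∈ S), f a ha < k) : jmap hn S hS f k ∈ Bk n k := by
  rw [mem_Bk_iff]
  constructor
  · have : ∀ b : V, jmap hn S hS f k b = ∑ i ∈ Finset.range k,
        (Finsupp.single (Cset hn S hS f i) 1 : V →₀ ℕ) b :=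
      fun b => by rw [jmap, Finsupp.finset_sum_apply]
    rw [Finset.sum_congr rfl (fun b _ => this b), Finset.sum_comm]
    have : ∀ i ∈ Finset.range k,
        (∑ b : V, (Finsupp.single (Cset hn S hS f i) 1 : V →₀ ℕ) b) = 1 := by
      intro i _
      have : ∀ b : V, (Finsupp.single (Cset hn S hS f i) 1 : V →₀ ℕ) b =
          if b = Cset hn S hS f i then 1 else 0 := by
        intro b
        rw [Finsupp.single_apply]
        by_cases h : Cset hn S hS f i = b
        · rw [if_pos h, if_pos h.symm]
        · rw [if_neg h, if_neg (fun he => h he.symm)]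
      rw [Finset.sum_congr rfl (fun b _ => this b),
        Finset.sum_ite_eq' Finset.univ _ (fun _ => 1), if_pos (Finset.mem_univ _)]
    rw [Finset.sum_congr rfl this]
    simp
  · intro a ha b hb
    have hex : ∀ c : V, c ∈ (jmap hn S hS f k).support →
        ∃ i, i < k ∧ Cset hn S hS f i = c := by
      intro c hc
      have := Finsupp.mem_support_iff.1 hc
      rw [jmap_apply] at this
      obtain ⟨i, hi⟩ := Finset.card_ne_zero.1 this
      rw [Finset.mem_filter, Finset.mem_range] at hi
      exact ⟨i, hi.1, hi.2⟩
    obtain ⟨i, _, rfl⟩ := hex a ha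
    obtain ⟨i', _, rfl⟩ := hex b hb
    have hmono : ∀ t t' : ℕ, t ≤ t' → (Cset hn S hS f t).1 ⊆ (Cset hn S hS f t').1 := by
      intro t t' htt x hx
      rw [Cset_val] at hx ⊢
      obtain ⟨h1, h2, h3⟩ := hx
      exact ⟨h1, h2, h3.trans htt⟩
    rcases le_or_gt i i' with h | h
    · exact Or.inl (hmono i i' h)
    · exact Or.inr (hmono i' i h.le)

lemma right_inv_top (S : Finset ℕ) (hS : S ∈ Pn n) (f : ∀ a ∈ S, ℕ)
    (hf : ∀ a (ha : a ∈ S), f a ha < k) (hk : 1 ≤ k) :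
    topd (jmap hn S hS f k) = S := by
  have hCk : (Cset hn S hS f (k - 1)).1 = S := by
    ext a
    rw [Cset_val]
    constructor
    · exact fun h => h.1
    · intro ha
      exact ⟨ha, ha, by have := hf a ha; omega⟩
  apply le_antisymm
  · apply Finset.sup_le
    intro b hb
    have := Finsupp.mem_support_iff.1 hb
    rw [jmap_apply] at this
    obtain ⟨i, hi⟩ := Finset.card_ne_zero.1 this
    rw [Finset.mem_filter] at hi
    rw [← hi.2]
    exact Finset.filter_subset _ _
  · have hmem : Cset hn S hS f (k - 1) ∈ (jmap hn S hS f k).support := by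
      rw [Finsupp.mem_support_iff, jmap_apply]
      apply Finset.card_ne_zero.2
      exact ⟨k - 1, Finset.mem_filter.2 ⟨Finset.mem_range.2 (by omega), rfl⟩⟩
    have h3 := Finset.le_sup (f := fun b : V => b.1) hmem
    exact le_trans (le_of_eq hCk.symm) h3

lemma right_inv_g (S : Finset ℕ) (hS : S ∈ Pn n) (f : ∀ a ∈ S, ℕ)
    (hf : ∀ a (ha : a ∈ S), f a ha < k) {a : ℕ} (ha : a ∈ S) :
    gfun (jmap hn S hS f k) a = f a ha := by
  rw [gfun]
  have step1 : ∀ b : V, (if a ∈ b.1 then 0 else jmap hn S hS f k b) =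
      ∑ i ∈ Finset.range k, (if b = Cset hn S hS f i then (if a ∈ (Cset hn S hS f i).1 then 0 else 1) else 0) := by
    intro b
    by_cases hab : a ∈ b.1
    · rw [if_pos hab]
      symm
      apply Finset.sum_eq_zero
      intro i _
      by_cases he : b = Cset hn S hS f i
      · rw [if_pos he, if_pos (he ▸ hab)]
      · rw [if_neg he]
    · rw [if_neg hab, jmap, Finsupp.finset_sum_apply]
      apply Finset.sum_congr rfl
      intro i _
      rw [Finsupp.single_apply]
      by_cases he : Cset hn S hS f i = b
      · rw [if_pos he, if_pos he.symm, if_neg (he ▸ hab)]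
      · rw [if_neg he, if_neg (fun h => he h.symm)]
  rw [Finset.sum_congr rfl (fun b _ => step1 b), Finset.sum_comm]
  have step2 : ∀ i ∈ Finset.range k,
      (∑ b : V, if b = Cset hn S hS f i then (if a ∈ (Cset hn S hS f i).1 then 0 else 1) else 0)
      = if f a ha ≤ i then 0 else 1 := by
    intro i _
    rw [Finset.sum_ite_eq' Finset.univ _ (fun _ => if a ∈ (Cset hn S hS f i).1 then 0 else 1),
      if_pos (Finset.mem_univ _)]
    have : a ∈ (Cset hn S hS f i).1 ↔ f a ha ≤ i := by
      rw [Cset_val]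
      constructor
      · rintro ⟨_, _, h⟩
        exact h
      · exact fun h => ⟨ha, ha, h⟩
    by_cases h : f a ha ≤ i
    · rw [if_pos (this.2 h), if_pos h]
    · rw [if_neg (fun hh => h (this.1 hh)), if_neg h]
  rw [Finset.sum_congr rfl step2]
  have : (Finset.range k).filter (fun i => ¬ f a ha ≤ i) = Finset.range (f a ha) := by
    ext i
    rw [Finset.mem_filter, Finset.mem_range, Finset.mem_range]
    have := hf a ha
    omega
  calc (∑ i ∈ Finset.range k, if f a ha ≤ i then 0 else 1)
      = ∑ i ∈ Finset.range k, if ¬ f a ha ≤ i then 1 else 0 := by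
        apply Finset.sum_congr rfl
        intro i _
        by_cases h : f a ha ≤ i
        · rw [if_pos h, if_neg (not_not.2 h)]
        · rw [if_neg h, if_pos h]
    _ = ((Finset.range k).filter (fun i => ¬ f a ha ≤ i)).card := (Finset.card_filter _ _).symm
    _ = f a ha := by rw [this, Finset.card_range]

theorem Bk_card (hn : 3 ≤ n) (hk : 1 ≤ k) : (Bk n k).card = ∑ S ∈ Pn n, k ^ S.card := by
  have htarget : ∑ S ∈ Pn n, k ^ S.card =
      ((Pn n).sigma (fun S => S.pi (fun _ => Finset.range k))).card := by
    rw [Finset.card_sigma]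
    apply Finset.sum_congr rfl
    intro S _
    rw [Finset.card_pi, Finset.prod_const, Finset.card_range]
  rw [htarget]
  refine Finset.card_bij' (fun d (_ : d ∈ Bk n k) =>
      (⟨topd d, fun a _ => gfun d a⟩ : Σ S : Finset ℕ, ∀ a ∈ S, ℕ))
    (fun x hx => jmap hn x.1 (Finset.mem_sigma.1 hx).1
      (fun a ha => x.2 a ha) k) ?_ ?_ ?_ ?_
  · intro d hd
    rw [Finset.mem_sigma]
    refine ⟨topd_mem d hd hk, ?_⟩
    rw [Finset.mem_pi]
    intro a ha
    rw [Finset.mem_range]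
    exact gfun_lt d hd hk ha
  · intro x hx
    have h2 := (Finset.mem_sigma.1 hx).2
    rw [Finset.mem_pi] at h2
    exact jmap_mem hn x.1 (Finset.mem_sigma.1 hx).1 _
      (fun a ha => Finset.mem_range.1 (h2 a ha))
  · intro d hd
    exact left_inv hn d hd hk
  · intro x hx
    obtain ⟨S, f⟩ := x
    have hS := (Finset.mem_sigma.1 hx).1
    have h2 := (Finset.mem_sigma.1 hx).2
    rw [Finset.mem_pi] at h2
    have hf : ∀ a (ha : a ∈ S), f a ha < k := fun a ha => Finset.mem_range.1 (h2 a ha)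
    show (⟨topd (jmap hn S hS f k), fun a _ => gfun (jmap hn S hS f k) a⟩ :
        Σ S : Finset ℕ, ∀ a ∈ S, ℕ) = ⟨S, f⟩
    set dj := jmap hn S hS f k with hdj
    have h1 : topd dj = S := right_inv_top hn S hS f hf hk
    have key : (⟨topd dj, fun a _ => gfun dj a⟩ : Σ S : Finset ℕ, ∀ a ∈ S, ℕ) =
        ⟨S, fun a (_ : a ∈ S) => gfun dj a⟩ := by
      rw [h1]
    rw [key]
    have : (fun a (_ : a ∈ S) => gfun dj a) = f := by
      funext a ha
      exact right_inv_g hn S hS f hf ha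
    rw [this]

end Counting
section Algebra
attribute [local irreducible] Pn
open scoped Classical

variable {n k : ℕ}

local notation "V" => {S : Finset ℕ // S ∈ Pn n}

variable (K : Type*) [Field K]


noncomputable abbrev Igen : Ideal (MvPolynomial V K) :=
  Ideal.span {p : MvPolynomial V K |
    ∃ S T : V, (¬ S.val ⊆ T.val ∧ ¬ T.val ⊆ S.val) ∧
      p = MvPolynomial.X S * MvPolynomial.X T}

lemma gens_eq : {p : MvPolynomial V K |
    ∃ S T : V, (¬ S.val ⊆ T.val ∧ ¬ T.val ⊆ S.val) ∧
      p = MvPolynomial.X S * MvPolynomial.X T} =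
    (fun e => MvPolynomial.monomial e (1 : K)) ''
      {e : V →₀ ℕ | ∃ S T : V, (¬ S.val ⊆ T.val ∧ ¬ T.val ⊆ S.val) ∧
        e = Finsupp.single S 1 + Finsupp.single T 1} := by
  have hXX : ∀ S T : V, (MvPolynomial.X S * MvPolynomial.X T : MvPolynomial V K) =
      MvPolynomial.monomial (Finsupp.single S 1 + Finsupp.single T 1) (1 : K) := by
    intro S T
    show (MvPolynomial.monomial (Finsupp.single S 1) (1 : K)) *
      (MvPolynomial.monomial (Finsupp.single T 1) (1 : K)) = _
    rw [MvPolynomial.monomial_mul, one_mul]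
  ext p
  constructor
  · rintro ⟨S, T, h, rfl⟩
    exact ⟨Finsupp.single S 1 + Finsupp.single T 1, ⟨S, T, h, rfl⟩, (hXX S T).symm⟩
  · rintro ⟨e, ⟨S, T, h, rfl⟩, rfl⟩
    exact ⟨S, T, h, (hXX S T).symm⟩

lemma single_add_single_le {S T : V} (hST : S ≠ T) (e : V →₀ ℕ) :
    Finsupp.single S 1 + Finsupp.single T 1 ≤ e ↔ 1 ≤ e S ∧ 1 ≤ e T := by
  rw [Finsupp.le_def]
  constructor
  · intro h
    constructor
    · have := h S
      rw [Finsupp.add_apply, Finsupp.single_apply, Finsupp.single_apply,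
        if_pos rfl, if_neg (fun he : T = S => hST he.symm)] at this
      omega
    · have := h T
      rw [Finsupp.add_apply, Finsupp.single_apply, Finsupp.single_apply,
        if_pos rfl, if_neg (fun he : S = T => hST he)] at this
      omega
  · rintro ⟨h1, h2⟩ a
    rw [Finsupp.add_apply, Finsupp.single_apply, Finsupp.single_apply]
    by_cases haS : S = a
    · rw [if_pos haS, if_neg (fun he : T = a => hST (haS.trans he.symm))]
      subst haS
      omega
    · rw [if_neg haS]
      by_cases haT : T = a
      · subst haT
        rw [if_pos rfl]
        omega
      · rw [if_neg haT]
        omega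

/-- the "bad" monomial predicate -/
def Pred (e : V →₀ ℕ) : Prop :=
  ∃ S T : V, (¬ S.val ⊆ T.val ∧ ¬ T.val ⊆ S.val) ∧ 1 ≤ e S ∧ 1 ≤ e T

lemma mem_Igen_iff (p : MvPolynomial V K) :
    p ∈ Igen K (n := n) ↔ ∀ e ∈ p.support, Pred e := by
  rw [Igen, gens_eq, MvPolynomial.mem_ideal_span_monomial_image]
  apply forall₂_congr
  intro e _
  constructor
  · rintro ⟨si, ⟨S, T, h, rfl⟩, hle⟩
    have hST : S ≠ T := fun he => h.1 (he ▸ Finset.Subset.refl _)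
    exact ⟨S, T, h, (single_add_single_le hST e).1 hle⟩
  · rintro ⟨S, T, h, h1, h2⟩
    have hST : S ≠ T := fun he => h.1 (he ▸ Finset.Subset.refl _)
    exact ⟨_, ⟨S, T, h, rfl⟩, (single_add_single_le hST e).2 ⟨h1, h2⟩⟩

lemma not_pred_of_mem_Bk {d : V →₀ ℕ} (hd : d ∈ Bk n k) : ¬ Pred d := by
  rintro ⟨S, T, h, h1, h2⟩
  have hch := ((mem_Bk_iff d).1 hd).2
  have hS : S ∈ d.support := Finsupp.mem_support_iff.2 (by omega)
  have hT : T ∈ d.support := Finsupp.mem_support_iff.2 (by omega)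
  rcases hch S hS T hT with hc | hc
  · exact h.1 hc
  · exact h.2 hc

lemma mem_Bk_of_homog {e : V →₀ ℕ} (hdeg : e.degree = k) (hnp : ¬ Pred e) :
    e ∈ Bk n k := by
  rw [mem_Bk_iff]
  constructor
  · rw [← hdeg, Finsupp.degree]
    exact (Finset.sum_subset (Finset.subset_univ _)
      (fun b _ hb => Finsupp.notMem_support_iff.1 hb)).symm
  · intro a ha b hb
    by_contra hcon
    push_neg at hcon
    exact hnp ⟨a, b, ⟨hcon.1, hcon.2⟩, Nat.one_le_iff_ne_zero.2 (Finsupp.mem_support_iff.1 ha),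
      Nat.one_le_iff_ne_zero.2 (Finsupp.mem_support_iff.1 hb)⟩

lemma degree_of_mem_Bk {d : V →₀ ℕ} (hd : d ∈ Bk n k) : d.degree = k := by
  rw [Finsupp.degree]
  rw [← ((mem_Bk_iff d).1 hd).1]
  exact Finset.sum_subset (Finset.subset_univ _)
    (fun b _ hb => Finsupp.notMem_support_iff.1 hb)

noncomputable def vmap (d : ↥(Bk n k)) : MvPolynomial V K ⧸ Igen K (n := n) :=
  Ideal.Quotient.mkₐ K (Igen K (n := n)) (MvPolynomial.monomial d.1 (1 : K))

lemma homog_degree {p : MvPolynomial V K}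
    (hp : p ∈ MvPolynomial.homogeneousSubmodule V K k) {e : V →₀ ℕ}
    (he : e ∈ p.support) : e.degree = k := by
  rw [MvPolynomial.mem_homogeneousSubmodule] at hp
  rw [Finsupp.degree_eq_weight_one]
  exact hp (MvPolynomial.mem_support_iff.1 he)

lemma span_eq :
    Submodule.map (Ideal.Quotient.mkₐ K (Igen K (n := n))).toLinearMap
      (MvPolynomial.homogeneousSubmodule V K k) =
    Submodule.span K (Set.range (vmap K (n := n) (k := k))) := by
  apply le_antisymm
  · rintro x ⟨p, hp, rfl⟩
    rw [AlgHom.toLinearMap_apply, MvPolynomial.as_sum p, map_sum]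
    apply Submodule.sum_mem
    intro e he
    by_cases hpred : Pred e
    · have : (MvPolynomial.monomial e (MvPolynomial.coeff e p)) ∈ Igen K (n := n) := by
        rw [mem_Igen_iff]
        intro e' he'
        rw [MvPolynomial.support_monomial] at he'
        have hc : ¬ (MvPolynomial.coeff e p = 0) := MvPolynomial.mem_support_iff.1 he
        rw [if_neg hc] at he'
        rw [Finset.mem_singleton] at he'
        subst he'
        exact hpred
      rw [Ideal.Quotient.mkₐ_eq_mk, Ideal.Quotient.eq_zero_iff_mem.2 this]
      exact Submodule.zero_mem _
    · have heBk : e ∈ Bk n k := mem_Bk_of_homog (homog_degree K hp he) hpred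
      have : MvPolynomial.monomial e (MvPolynomial.coeff e p) =
          (MvPolynomial.coeff e p) • MvPolynomial.monomial e (1 : K) := by
        rw [MvPolynomial.smul_monomial, smul_eq_mul, mul_one]
      rw [this, map_smul]
      exact Submodule.smul_mem _ _ (Submodule.subset_span ⟨⟨e, heBk⟩, rfl⟩)
  · rw [Submodule.span_le]
    rintro x ⟨d, rfl⟩
    rw [SetLike.mem_coe]
    refine Submodule.mem_map.2 ⟨MvPolynomial.monomial d.1 (1 : K), ?_, rfl⟩
    rw [MvPolynomial.mem_homogeneousSubmodule]
    exact MvPolynomial.isHomogeneous_monomial _ (degree_of_mem_Bk d.2)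

lemma vmap_li : LinearIndependent K (vmap K (n := n) (k := k)) := by
  rw [Fintype.linearIndependent_iff]
  intro g hg d₀
  set q : MvPolynomial V K := ∑ d : ↥(Bk n k), g d • MvPolynomial.monomial d.1 (1 : K) with hq
  have hπq : Ideal.Quotient.mkₐ K (Igen K (n := n)) q = 0 := by
    rw [hq, map_sum, ← hg]
    apply Finset.sum_congr rfl
    intro d _
    rw [map_smul]
    rfl
  rw [Ideal.Quotient.mkₐ_eq_mk] at hπq
  have hqI : q ∈ Igen K (n := n) := Ideal.Quotient.eq_zero_iff_mem.1 hπq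
  by_contra hg₀
  have hcoeff : MvPolynomial.coeff d₀.1 q = g d₀ := by
    rw [hq, MvPolynomial.coeff_sum]
    rw [Finset.sum_eq_single d₀]
    · rw [MvPolynomial.coeff_smul, MvPolynomial.coeff_monomial, if_pos rfl, smul_eq_mul, mul_one]
    · intro d _ hne
      rw [MvPolynomial.coeff_smul, MvPolynomial.coeff_monomial,
        if_neg (fun he => hne (Subtype.ext he)), smul_eq_mul, mul_zero]
    · intro h
      exact absurd (Finset.mem_univ d₀) h
  have hd₀supp : d₀.1 ∈ q.support := MvPolynomial.mem_support_iff.2 (by rw [hcoeff]; exact hg₀)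
  have := (mem_Igen_iff K q).1 hqI d₀.1 hd₀supp
  exact not_pred_of_mem_Bk d₀.2 this

theorem finrank_eq_card_Bk :
    Module.finrank K
      (Submodule.map (Ideal.Quotient.mkₐ K (Igen K (n := n))).toLinearMap
        (MvPolynomial.homogeneousSubmodule V K k)) = (Bk n k).card := by
  rw [span_eq]
  rw [Module.finrank_eq_card_basis (Module.Basis.span (vmap_li K (n := n) (k := k)))]
  exact Fintype.card_coe _

end Algebra

lemma sum_pow_eq {n : ℕ} (hn : 3 ≤ n) (k : ℕ) :
    ∑ S ∈ Pn n, k ^ S.card =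
      ∑ j ∈ Finset.range ((n - 1) / 2 + 1), pcount n j * k ^ j := by
  classical
  rw [← Finset.sum_fiberwise_of_maps_to (g := Finset.card)
    (t := Finset.range ((n - 1) / 2 + 1))
    (fun S hS => Finset.mem_range.2 (by have := Pn_card_le hn hS; omega))
    (fun S => k ^ S.card)]
  apply Finset.sum_congr rfl
  intro j _
  rw [pcount]
  have hcong : ∀ S ∈ (Pn n).filter (fun S => S.card = j), k ^ S.card = k ^ j := by
    intro S hS
    rw [(Finset.mem_filter.1 hS).2]
  rw [Finset.sum_congr rfl hcong, Finset.sum_const, smul_eq_mul]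

end PeakAux

/-- Theorem 4.1: the Hilbert function of the algebra `A_{P_n} = K[x_S : S ∈ P_n]/I`,
where `I` is generated by the products `x_S·x_T` over incomparable pairs `S, T ∈ P_n`:
for `k ≥ 1`, `dim_K A_{P_n}^k = Σ_{j=0}^{⌊(n−1)/2⌋} p_{n,j−1}·k^j`, i.e. the Hilbert
polynomial is `x^{⌊(n−1)/2⌋}·P_n(1/x)`. -/
theorem hilbert_polynomial_A (n : ℕ) (hn : 3 ≤ n) (K : Type*) [Field K]
    (k : ℕ) (hk : 1 ≤ k) :
    Module.finrank K
      (Submodule.map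
        (Ideal.Quotient.mkₐ K
          (Ideal.span {p : MvPolynomial {S : Finset ℕ // S ∈ Pn n} K |
            ∃ S T : {S : Finset ℕ // S ∈ Pn n},
              (¬ S.val ⊆ T.val ∧ ¬ T.val ⊆ S.val) ∧
              p = MvPolynomial.X S * MvPolynomial.X T})).toLinearMap
        (MvPolynomial.homogeneousSubmodule {S : Finset ℕ // S ∈ Pn n} K k)) =
      ∑ j ∈ Finset.range ((n - 1) / 2 + 1), pcount n j * k ^ j := by
  rw [show (Ideal.span {p : MvPolynomial {S : Finset ℕ // S ∈ Pn n} K |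
            ∃ S T : {S : Finset ℕ // S ∈ Pn n},
              (¬ S.val ⊆ T.val ∧ ¬ T.val ⊆ S.val) ∧
              p = MvPolynomial.X S * MvPolynomial.X T}) = PeakAux.Igen K (n := n) from rfl]
  rw [PeakAux.finrank_eq_card_Bk, PeakAux.Bk_card hn hk, PeakAux.sum_pow_eq hn k]
end
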